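/- (Standard liftings form a basis.) Let γ be a partition of n. Call π ∈ Π_γ standard if, for every c ≥ 1 and all block indices i < j such that blocks i and j of π both have size ≥ c, the c-th smallest element of block i is less than the c-th smallest element of block j. Let v ∈ V_γ* (the Specht submodule of ℝ^{Π_γ}) with v ≠ 0, and let π_0 ∈ Π_γ. Then {B_π v : π ∈ Π_γ standard} is a basis of the left S_n-module span{ρ_L(σ)(B_{π_0} v) : σ ∈ S_n} ⊆ ℝ^{S_n}; in particular this subspace equals span{B_μ v : μ ∈ Π_γ} and its dimension equals the number of standard ordered set partitions of shape γ. -/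

import Mathlib

open Finset

/-- Ordered set partitions of `Fin n` of shape `γ : Fin ℓ → ℕ`: functions
`μ : Fin n → Fin ℓ` whose `j`-th block `μ⁻¹(j)` has exactly `γ j` elements. -/
def OSP (n ℓ : ℕ) (γ : Fin ℓ → ℕ) : Type :=
  {μ : Fin n → Fin ℓ // ∀ j : Fin ℓ, (Finset.univ.filter fun x => μ x = j).card = γ j}

instance {n ℓ : ℕ} {γ : Fin ℓ → ℕ} : Fintype (OSP n ℓ γ) := by
  unfold OSP; infer_instance

instance {n ℓ : ℕ} {γ : Fin ℓ → ℕ} : DecidableEq (OSP n ℓ γ) := by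
  unfold OSP; infer_instance

/-- The left action of `S_n` on ordered set partitions: `(σ · μ)(x) = μ (σ⁻¹ x)`. -/
def ospAct {n ℓ : ℕ} {γ : Fin ℓ → ℕ} (σ : Equiv.Perm (Fin n)) (μ : OSP n ℓ γ) : OSP n ℓ γ :=
  ⟨fun x => μ.1 (σ.symm x), fun j => by
    rw [← μ.2 j, ← Fintype.card_subtype, ← Fintype.card_subtype]
    exact Fintype.card_congr (σ.symm.subtypeEquiv fun a => Iff.rfl)⟩

/-- The characteristic ("lifting") map `B_π : ℝ^{Π_γ} → ℝ^{S_n}` given by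
`(B_π x)(σ) = x (σ⁻¹ · π)`. -/
def liftB {n ℓ : ℕ} {γ : Fin ℓ → ℕ} (π : OSP n ℓ γ) (x : OSP n ℓ γ → ℝ) :
    Equiv.Perm (Fin n) → ℝ :=
  fun σ => x (ospAct σ⁻¹ π)

/-- The (0-indexed) column of `x` in the ordered set partition `μ`: `x` lies in column `c`
iff `x` is the `(c+1)`-st smallest element of its block, i.e. exactly `c` elements of the
block of `x` are smaller than `x`. -/
def colOf {n ℓ : ℕ} {γ : Fin ℓ → ℕ} (μ : OSP n ℓ γ) (x : Fin n) : ℕ :=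
  (Finset.univ.filter fun y => μ.1 y = μ.1 x ∧ y < x).card

/-- The column group `C_μ`: permutations preserving each column of `μ` setwise. -/
def colGroup {n ℓ : ℕ} {γ : Fin ℓ → ℕ} (μ : OSP n ℓ γ) : Finset (Equiv.Perm (Fin n)) :=
  Finset.univ.filter fun β => ∀ x : Fin n, colOf μ (β x) = colOf μ x

/-- The polytabloid `q_μ = ∑_{β ∈ C_μ} sign(β)·e_{β⁻¹·μ} ∈ ℝ^{Π_γ}`. -/
def polytabloid {n ℓ : ℕ} {γ : Fin ℓ → ℕ} (μ : OSP n ℓ γ) : OSP n ℓ γ → ℝ :=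
  fun ρ => ∑ β ∈ colGroup μ,
    if ospAct β⁻¹ μ = ρ then ((Equiv.Perm.sign β : ℤ) : ℝ) else 0

/-- The Specht submodule `V_γ* ⊆ ℝ^{Π_γ}`: the span of the polytabloids. -/
def Specht (n ℓ : ℕ) (γ : Fin ℓ → ℕ) : Submodule ℝ (OSP n ℓ γ → ℝ) :=
  Submodule.span ℝ (Set.range (polytabloid (n := n) (ℓ := ℓ) (γ := γ)))

/-- The left regular representation of `S_n` on `ℝ^{S_n}`: `(ρ_L(τ) f)(σ) = f (τ⁻¹ σ)`. -/
def rhoL {n : ℕ} (τ : Equiv.Perm (Fin n)) (f : Equiv.Perm (Fin n) → ℝ) :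
    Equiv.Perm (Fin n) → ℝ :=
  fun σ => f (τ⁻¹ * σ)

/-- An ordered set partition is standard if, whenever `x` and `y` occupy the same column
(both are the `c`-th smallest of their respective blocks) and the block of `x` precedes
the block of `y`, then `x < y`. -/
def IsStandard {n ℓ : ℕ} {γ : Fin ℓ → ℕ} (μ : OSP n ℓ γ) : Prop :=
  ∀ x y : Fin n, colOf μ x = colOf μ y → μ.1 x < μ.1 y → x < y

namespace SLB

open Finset Equiv

variable {n ℓ : ℕ} {γ : Fin ℓ → ℕ}

@[simp] lemma ospAct_apply (σ : Equiv.Perm (Fin n)) (μ : OSP n ℓ γ) (x : Fin n) :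
    (ospAct σ μ).1 x = μ.1 (σ.symm x) := rfl

@[simp] lemma ospAct_inv_apply (β : Equiv.Perm (Fin n)) (μ : OSP n ℓ γ) (x : Fin n) :
    (ospAct β⁻¹ μ).1 x = μ.1 (β x) := by
  simp [ospAct_apply, Equiv.Perm.inv_def]

lemma osp_ext {μ ν : OSP n ℓ γ} (h : ∀ x, μ.1 x = ν.1 x) : μ = ν :=
  Subtype.ext (funext h)

@[simp] lemma ospAct_one (μ : OSP n ℓ γ) : ospAct 1 μ = μ := osp_ext fun _ => rfl

lemma ospAct_mul (σ τ : Equiv.Perm (Fin n)) (μ : OSP n ℓ γ) :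
    ospAct (σ * τ) μ = ospAct σ (ospAct τ μ) := osp_ext fun _ => rfl

@[simp] lemma ospAct_inv_act (σ : Equiv.Perm (Fin n)) (μ : OSP n ℓ γ) :
    ospAct σ⁻¹ (ospAct σ μ) = μ := by
  rw [← ospAct_mul, inv_mul_cancel, ospAct_one]

@[simp] lemma ospAct_act_inv (σ : Equiv.Perm (Fin n)) (μ : OSP n ℓ γ) :
    ospAct σ (ospAct σ⁻¹ μ) = μ := by
  rw [← ospAct_mul, mul_inv_cancel, ospAct_one]

lemma ospAct_eq_iff (σ : Equiv.Perm (Fin n)) {μ ν : OSP n ℓ γ} :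
    ospAct σ μ = ν ↔ μ = ospAct σ⁻¹ ν := by
  constructor
  · rintro rfl; rw [ospAct_inv_act]
  · rintro rfl; rw [ospAct_act_inv]

lemma ospAct_injective (σ : Equiv.Perm (Fin n)) : Function.Injective (ospAct (γ := γ) σ) := by
  intro μ ν h
  have := congrArg (ospAct σ⁻¹) h
  rwa [ospAct_inv_act, ospAct_inv_act] at this

/-- the action on functions -/
def pAct (σ : Equiv.Perm (Fin n)) (x : OSP n ℓ γ → ℝ) : OSP n ℓ γ → ℝ :=
  fun ρ => x (ospAct σ⁻¹ ρ)

lemma pAct_mul (σ τ : Equiv.Perm (Fin n)) (x : OSP n ℓ γ → ℝ) :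
    pAct (σ * τ) x = pAct σ (pAct τ x) := by
  funext ρ
  simp [pAct, mul_inv_rev, ospAct_mul]

/-- the standard bilinear form -/
def dot (x y : OSP n ℓ γ → ℝ) : ℝ := ∑ ρ, x ρ * y ρ

/-- equiv version of ospAct for reindexing sums -/
def ospEquiv (σ : Equiv.Perm (Fin n)) : OSP n ℓ γ ≃ OSP n ℓ γ where
  toFun := ospAct σ
  invFun := ospAct σ⁻¹
  left_inv := ospAct_inv_act σ
  right_inv := ospAct_act_inv σ

lemma dot_pAct (σ : Equiv.Perm (Fin n)) (x y : OSP n ℓ γ → ℝ) :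
    dot (pAct σ x) y = dot x (pAct σ⁻¹ y) := by
  unfold dot pAct
  refine (Fintype.sum_equiv (ospEquiv (γ := γ) σ)
    (fun ν => x ν * y (ospAct σ⁻¹⁻¹ ν)) (fun ρ => x (ospAct σ⁻¹ ρ) * y ρ) ?_).symm
  intro ν
  simp [ospEquiv, inv_inv]

lemma dot_comm (x y : OSP n ℓ γ → ℝ) : dot x y = dot y x := by
  unfold dot; exact Finset.sum_congr rfl fun ρ _ => mul_comm _ _

def delta (π : OSP n ℓ γ) : OSP n ℓ γ → ℝ := fun ρ => if ρ = π then 1 else 0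

lemma pAct_delta (σ : Equiv.Perm (Fin n)) (π : OSP n ℓ γ) :
    pAct σ (delta π) = delta (ospAct σ π) := by
  funext ρ
  unfold pAct delta
  congr 1
  simp only [eq_iff_iff]
  constructor
  · intro h; rw [← h, ospAct_act_inv]
  · rintro rfl; rw [ospAct_inv_act]

/-! ### colOf lemmas -/

lemma colOf_lt (μ : OSP n ℓ γ) (x : Fin n) : colOf μ x < γ (μ.1 x) := by
  rw [← μ.2 (μ.1 x)]
  apply Finset.card_lt_card
  rw [Finset.ssubset_iff_of_subset]
  · exact ⟨x, by simp, by simp⟩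
  · intro y hy
    simp only [mem_filter, mem_univ, true_and] at hy ⊢
    exact hy.1

lemma colOf_lt_colOf {μ : OSP n ℓ γ} {x y : Fin n} (hb : μ.1 x = μ.1 y) (hxy : x < y) :
    colOf μ x < colOf μ y := by
  apply Finset.card_lt_card
  rw [Finset.ssubset_iff_of_subset]
  · refine ⟨x, by simp [hb, hxy], by simp⟩
  · intro z hz
    simp only [mem_filter, mem_univ, true_and] at hz ⊢
    exact ⟨hz.1.trans hb, hz.2.trans hxy⟩

lemma colOf_injOn {μ : OSP n ℓ γ} {x y : Fin n} (hb : μ.1 x = μ.1 y)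
    (hc : colOf μ x = colOf μ y) : x = y := by
  rcases lt_trichotomy x y with h | h | h
  · exact absurd hc (ne_of_lt (colOf_lt_colOf hb h))
  · exact h
  · exact absurd hc.symm (ne_of_lt (colOf_lt_colOf hb.symm h))

lemma exists_cell (μ : OSP n ℓ γ) (j : Fin ℓ) {c : ℕ} (hc : c < γ j) :
    ∃ x, μ.1 x = j ∧ colOf μ x = c := by
  classical
  set S := Finset.univ.filter fun x => μ.1 x = j with hS
  have hcard : S.card = γ j := μ.2 j
  have hinj : Set.InjOn (colOf μ) S := by
    intro a ha b hb hab
    simp only [hS, mem_coe, mem_filter] at ha hb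
    exact colOf_injOn (ha.2.trans hb.2.symm) hab
  have himg : S.image (colOf μ) ⊆ Finset.range (γ j) := by
    intro c' hc'
    simp only [mem_image] at hc'
    obtain ⟨a, ha, rfl⟩ := hc'
    simp only [hS, mem_filter] at ha
    rw [Finset.mem_range, ← ha.2]
    exact colOf_lt μ a
  have : S.image (colOf μ) = Finset.range (γ j) := by
    apply Finset.eq_of_subset_of_card_le himg
    rw [Finset.card_range, Finset.card_image_of_injOn hinj, hcard]
  have hcmem : c ∈ S.image (colOf μ) := by rw [this]; exact Finset.mem_range.2 hc
  simp only [mem_image] at hcmem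
  obtain ⟨a, ha, hac⟩ := hcmem
  simp only [hS, mem_filter] at ha
  exact ⟨a, ha.2, hac⟩

noncomputable def cellElem (μ : OSP n ℓ γ) (j : Fin ℓ) (c : ℕ) (hc : c < γ j) : Fin n :=
  (exists_cell μ j hc).choose

lemma cellElem_row (μ : OSP n ℓ γ) (j : Fin ℓ) (c : ℕ) (hc : c < γ j) :
    μ.1 (cellElem μ j c hc) = j := (exists_cell μ j hc).choose_spec.1

lemma cellElem_col (μ : OSP n ℓ γ) (j : Fin ℓ) (c : ℕ) (hc : c < γ j) :
    colOf μ (cellElem μ j c hc) = c := (exists_cell μ j hc).choose_spec.2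

/-! ### colGroup lemmas -/

lemma mem_colGroup {μ : OSP n ℓ γ} {β : Equiv.Perm (Fin n)} :
    β ∈ colGroup μ ↔ ∀ x, colOf μ (β x) = colOf μ x := by
  simp [colGroup]

lemma one_mem_colGroup (μ : OSP n ℓ γ) : (1 : Equiv.Perm (Fin n)) ∈ colGroup μ :=
  mem_colGroup.2 fun _ => rfl

lemma mul_mem_colGroup {μ : OSP n ℓ γ} {α β : Equiv.Perm (Fin n)}
    (hα : α ∈ colGroup μ) (hβ : β ∈ colGroup μ) : α * β ∈ colGroup μ := by
  rw [mem_colGroup] at *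
  intro x
  simpa using (hα (β x)).trans (hβ x)

lemma inv_mem_colGroup {μ : OSP n ℓ γ} {β : Equiv.Perm (Fin n)}
    (hβ : β ∈ colGroup μ) : β⁻¹ ∈ colGroup μ := by
  rw [mem_colGroup] at *
  intro x
  have := hβ (β⁻¹ x)
  simpa using this.symm

end SLB

namespace SLB

open Finset Equiv

variable {n ℓ : ℕ} {γ : Fin ℓ → ℕ}

lemma act_eq_self_of_fix {μ : OSP n ℓ γ} {β : Equiv.Perm (Fin n)}
    (h : ∀ x, μ.1 (β x) = μ.1 x) : ospAct β⁻¹ μ = μ := by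
  apply osp_ext
  intro x
  rw [ospAct_inv_apply, h]

lemma colGroup_eq_iff {t : OSP n ℓ γ} {β β' : Equiv.Perm (Fin n)}
    (hβ : β ∈ colGroup t) (hβ' : β' ∈ colGroup t)
    (h : ospAct β⁻¹ t = ospAct β'⁻¹ t) : β = β' := by
  rw [mem_colGroup] at hβ hβ'
  ext x
  have hb : t.1 (β x) = t.1 (β' x) := by
    have := congrArg (fun ν : OSP n ℓ γ => ν.1 x) h
    simpa [ospAct_inv_apply, Equiv.Perm.inv_def, Equiv.symm_symm] using this
  have : (β x : Fin n) = β' x := colOf_injOn hb ((hβ x).trans (hβ' x).symm)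
  exact congrArg Fin.val this

lemma poly_self (μ : OSP n ℓ γ) : polytabloid μ μ = 1 := by
  unfold polytabloid
  rw [Finset.sum_eq_single (1 : Equiv.Perm (Fin n))]
  · simp
  · intro β hβ hne
    rw [if_neg]
    intro h
    exact hne (colGroup_eq_iff hβ (one_mem_colGroup μ) (by simpa using h))
  · intro h
    exact absurd (one_mem_colGroup μ) h

lemma poly_ne_zero_exists {t π : OSP n ℓ γ} (h : polytabloid t π ≠ 0) :
    ∃ β ∈ colGroup t, ospAct β⁻¹ t = π := by
  by_contra hc
  push_neg at hc
  apply h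
  unfold polytabloid
  apply Finset.sum_eq_zero
  intro β hβ
  rw [if_neg (hc β hβ)]

/-! ### counting lemma -/

lemma card_column (t : OSP n ℓ γ) (c : ℕ) :
    (Finset.univ.filter fun x => colOf t x = c).card
      = (Finset.univ.filter fun j : Fin ℓ => c < γ j).card := by
  apply Finset.card_bij (fun x _ => t.1 x)
  · intro a ha
    simp only [mem_filter, mem_univ, true_and] at ha ⊢
    rw [← ha]; exact colOf_lt t a
  · intro a ha b hb hab
    simp only [mem_filter, mem_univ, true_and] at ha hb
    exact colOf_injOn hab (ha.trans hb.symm)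
  · intro j hj
    simp only [mem_filter, mem_univ, true_and] at hj
    obtain ⟨x, hx1, hx2⟩ := exists_cell t j hj
    exact ⟨x, by simp [hx2], hx1⟩

lemma fiberwise_card (μ : OSP n ℓ γ) (p : Fin n → Prop) [DecidablePred p] :
    (Finset.univ.filter p).card
      = ∑ j, (Finset.univ.filter fun x => μ.1 x = j ∧ p x).card := by
  rw [Finset.card_eq_sum_card_fiberwise (f := fun x => μ.1 x) (t := Finset.univ)
    (fun x _ => Finset.mem_univ _)]
  apply Finset.sum_congr rfl
  intro j _
  congr 1
  rw [Finset.filter_filter]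
  apply Finset.filter_congr
  intro x _
  tauto

lemma count_blocks (t μ : OSP n ℓ γ)
    (hinj : ∀ x y : Fin n, colOf t x = colOf t y → μ.1 x = μ.1 y → x = y) :
    ∀ c : ℕ, ∀ j : Fin ℓ,
      (Finset.univ.filter fun x => μ.1 x = j ∧ colOf t x < c).card = min c (γ j) := by
  intro c
  induction c with
  | zero => intro j; simp
  | succ c ih =>
    have bnd : ∀ j : Fin ℓ,
        (Finset.univ.filter fun x => μ.1 x = j ∧ colOf t x < c + 1).card
          ≤ min (c + 1) (γ j) := by
      intro j
      have h1 : (Finset.univ.filter fun x => μ.1 x = j ∧ colOf t x < c + 1)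
          ⊆ (Finset.univ.filter fun x => μ.1 x = j ∧ colOf t x < c)
            ∪ (Finset.univ.filter fun x => μ.1 x = j ∧ colOf t x = c) := by
        intro z hz
        simp only [mem_filter, mem_univ, true_and, mem_union] at hz ⊢
        omega
      have h2 : (Finset.univ.filter fun x => μ.1 x = j ∧ colOf t x = c).card ≤ 1 := by
        apply Finset.card_le_one.2
        intro a ha b hb
        simp only [mem_filter, mem_univ, true_and] at ha hb
        exact hinj a b (ha.2.trans hb.2.symm) (ha.1.trans hb.1.symm)
      have h3 : (Finset.univ.filter fun x => μ.1 x = j ∧ colOf t x < c + 1).card ≤ γ j := by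
        rw [← μ.2 j]
        apply Finset.card_le_card
        intro z hz
        simp only [mem_filter, mem_univ, true_and] at hz ⊢
        exact hz.1
      have h4 := (Finset.card_le_card h1).trans (Finset.card_union_le _ _)
      have h5 := ih j
      omega
    have hsplit : (Finset.univ.filter fun x : Fin n => colOf t x < c + 1)
        = (Finset.univ.filter fun x => colOf t x < c)
          ∪ (Finset.univ.filter fun x => colOf t x = c) := by
      ext z; simp only [mem_filter, mem_univ, true_and, mem_union]; omega
    have hdisj : Disjoint (Finset.univ.filter fun x : Fin n => colOf t x < c)
        (Finset.univ.filter fun x : Fin n => colOf t x = c) := by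
      rw [Finset.disjoint_left]
      intro z hz1 hz2
      simp only [mem_filter, mem_univ, true_and] at hz1 hz2
      omega
    have htot : ∑ j, (Finset.univ.filter fun x => μ.1 x = j ∧ colOf t x < c + 1).card
        = ∑ j, min (c + 1) (γ j) := by
      rw [← fiberwise_card μ]
      rw [hsplit, Finset.card_union_of_disjoint hdisj]
      rw [fiberwise_card μ (fun x => colOf t x < c), card_column t c]
      have h6 : (Finset.univ.filter fun j : Fin ℓ => c < γ j).card
          = ∑ j, if c < γ j then 1 else 0 := by
        rw [Finset.card_filter]
      rw [h6, ← Finset.sum_add_distrib]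
      apply Finset.sum_congr rfl
      intro j _
      rw [ih j]
      split <;> omega
    intro j
    by_contra hne
    have hlt : (Finset.univ.filter fun x => μ.1 x = j ∧ colOf t x < c + 1).card
        < min (c + 1) (γ j) := lt_of_le_of_ne (bnd j) hne
    have := Finset.sum_lt_sum (f := fun j : Fin ℓ =>
        (Finset.univ.filter fun x => μ.1 x = j ∧ colOf t x < c + 1).card)
      (g := fun j => min (c + 1) (γ j))
      (fun i _ => bnd i) ⟨j, Finset.mem_univ j, hlt⟩
    exact (Nat.ne_of_lt this) htot

lemma colOf_lt_of_inj (t μ : OSP n ℓ γ)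
    (hinj : ∀ x y : Fin n, colOf t x = colOf t y → μ.1 x = μ.1 y → x = y) (x : Fin n) :
    colOf t x < γ (μ.1 x) := by
  by_contra h
  push_neg at h
  set c0 := colOf t x with hc0
  set j := μ.1 x with hj
  have h1 := count_blocks t μ hinj c0 j
  rw [min_eq_right h] at h1
  have h2 : (Finset.univ.filter fun z => μ.1 z = j ∧ colOf t z < c0)
      = (Finset.univ.filter fun z => μ.1 z = j) := by
    apply Finset.eq_of_subset_of_card_le
    · intro z hz
      simp only [mem_filter, mem_univ, true_and] at hz ⊢
      exact hz.1
    · rw [μ.2 j, h1]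
  have hx : x ∈ (Finset.univ.filter fun z => μ.1 z = j) := by simp [hj]
  rw [← h2] at hx
  simp only [mem_filter, mem_univ, true_and] at hx
  omega

lemma exists_colGroup_elt (t μ : OSP n ℓ γ)
    (hinj : ∀ x y : Fin n, colOf t x = colOf t y → μ.1 x = μ.1 y → x = y) :
    ∃ β ∈ colGroup t, ospAct β⁻¹ t = μ := by
  classical
  set g : Fin n → Fin n := fun x => cellElem t (μ.1 x) (colOf t x) (colOf_lt_of_inj t μ hinj x)
    with hg
  have hrow : ∀ x, t.1 (g x) = μ.1 x := fun x => cellElem_row _ _ _ _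
  have hcol : ∀ x, colOf t (g x) = colOf t x := fun x => cellElem_col _ _ _ _
  have hginj : Function.Injective g := by
    intro a b hab
    apply hinj
    · rw [← hcol a, ← hcol b, hab]
    · rw [← hrow a, ← hrow b, hab]
  let β : Equiv.Perm (Fin n) := Equiv.ofBijective g (Finite.injective_iff_bijective.mp hginj)
  have hβapp : ∀ x, β x = g x := fun x => rfl
  refine ⟨β, ?_, ?_⟩
  · rw [mem_colGroup]
    intro x
    rw [hβapp, hcol]
  · apply osp_ext
    intro x
    rw [ospAct_inv_apply, hβapp, hrow]

/-! ### the kappa lemma -/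

lemma sign_val_mul (α β : Equiv.Perm (Fin n)) :
    ((Equiv.Perm.sign (α * β) : ℤ) : ℝ)
      = ((Equiv.Perm.sign α : ℤ) : ℝ) * ((Equiv.Perm.sign β : ℤ) : ℝ) := by
  rw [Equiv.Perm.sign_mul]
  push_cast
  ring

lemma sign_sq (α : Equiv.Perm (Fin n)) :
    ((Equiv.Perm.sign α : ℤ) : ℝ) * ((Equiv.Perm.sign α : ℤ) : ℝ) = 1 := by
  rcases Int.units_eq_one_or (Equiv.Perm.sign α) with h | h <;> rw [h] <;> norm_num

lemma kappa_matrix (t μ ρ : OSP n ℓ γ) :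
    (∑ β ∈ colGroup t,
        if ospAct β⁻¹ ρ = μ then ((Equiv.Perm.sign β : ℤ) : ℝ) else 0)
      = polytabloid t μ * polytabloid t ρ := by
  classical
  by_cases hcase : ∃ x y : Fin n, x ≠ y ∧ colOf t x = colOf t y ∧ μ.1 x = μ.1 y
  · obtain ⟨x, y, hxy, hcol, hblk⟩ := hcase
    have hq : polytabloid t μ = 0 := by
      unfold polytabloid
      apply Finset.sum_eq_zero
      intro β hβ
      rw [if_neg]
      intro h
      apply hxy
      have hbx : t.1 (β x) = t.1 (β y) := by
        have h1 := congrArg (fun ν : OSP n ℓ γ => ν.1 x) h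
        have h2 := congrArg (fun ν : OSP n ℓ γ => ν.1 y) h
        simp only [ospAct_inv_apply] at h1 h2
        have e1 : t.1 (β x) = μ.1 x := h1
        have e2 : t.1 (β y) = μ.1 y := h2
        rw [e1, e2, hblk]
      rw [mem_colGroup] at hβ
      have : (β x : Fin n) = β y := colOf_injOn hbx (((hβ x).trans hcol).trans (hβ y).symm)
      exact β.injective this
    rw [hq, zero_mul]
    have hswap : Equiv.swap x y ∈ colGroup t := by
      rw [mem_colGroup]
      intro z
      by_cases h1 : z = x
      · rw [h1, Equiv.swap_apply_left]; exact hcol.symm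
      by_cases h2 : z = y
      · rw [h2, Equiv.swap_apply_right]; exact hcol
      · rw [Equiv.swap_apply_of_ne_of_ne h1 h2]
    have hswapblk : ∀ z, μ.1 (Equiv.swap x y z) = μ.1 z := by
      intro z
      by_cases h1 : z = x
      · rw [h1, Equiv.swap_apply_left]; exact hblk.symm
      by_cases h2 : z = y
      · rw [h2, Equiv.swap_apply_right]; exact hblk
      · rw [Equiv.swap_apply_of_ne_of_ne h1 h2]
    have hfixμ : ospAct (Equiv.swap x y) μ = μ := by
      apply osp_ext
      intro z
      simp only [ospAct_apply, Equiv.symm_swap]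
      exact hswapblk z
    apply Finset.sum_involution (fun β _ => β * Equiv.swap x y)
    · intro β hβ
      have hfixμ' : ospAct (Equiv.swap x y)⁻¹ μ = μ := by
        conv_lhs => rw [← hfixμ]
        rw [ospAct_inv_act]
      have hcond : (ospAct (β * Equiv.swap x y)⁻¹ ρ = μ) ↔ (ospAct β⁻¹ ρ = μ) := by
        rw [mul_inv_rev, ospAct_mul, ospAct_eq_iff, inv_inv, hfixμ]
      rw [sign_val_mul]
      have hsgn : ((Equiv.Perm.sign (Equiv.swap x y) : ℤ) : ℝ) = -1 := by
        rw [Equiv.Perm.sign_swap hxy]; norm_num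
      by_cases h : ospAct β⁻¹ ρ = μ
      · rw [if_pos h, if_pos (hcond.2 h), hsgn]; ring
      · rw [if_neg h, if_neg (fun hh => h (hcond.1 hh))]; ring
    · intro β hβ _
      intro h
      have := congrArg (fun p : Equiv.Perm (Fin n) => β⁻¹ * p) h
      simp only [← mul_assoc, inv_mul_cancel, one_mul] at this
      have := congrArg (fun p : Equiv.Perm (Fin n) => p x) this
      simp only [Equiv.swap_apply_left, Equiv.Perm.one_apply] at this
      exact hxy this.symm
    · intro β hβ
      exact mul_mem_colGroup hβ hswap
    · intro β hβ
      rw [mul_assoc]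
      simp
  · push_neg at hcase
    have hinj : ∀ x y : Fin n, colOf t x = colOf t y → μ.1 x = μ.1 y → x = y := by
      intro x y h1 h2
      by_contra hne
      exact (hcase x y hne h1) h2
    obtain ⟨β₀, hβ₀, hβ₀t⟩ := exists_colGroup_elt t μ hinj
    have hqμ : polytabloid t μ = ((Equiv.Perm.sign β₀ : ℤ) : ℝ) := by
      unfold polytabloid
      rw [Finset.sum_eq_single β₀]
      · rw [if_pos hβ₀t]
      · intro β hβ hne
        rw [if_neg]
        intro h
        exact hne (colGroup_eq_iff hβ hβ₀ (h.trans hβ₀t.symm))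
      · intro h; exact absurd hβ₀ h
    rw [hqμ]
    unfold polytabloid
    rw [Finset.mul_sum]
    apply Finset.sum_nbij' (i := fun β => β₀ * β⁻¹) (j := fun δ => δ⁻¹ * β₀)
    · intro β hβ
      exact mul_mem_colGroup hβ₀ (inv_mem_colGroup hβ)
    · intro δ hδ
      exact mul_mem_colGroup (inv_mem_colGroup hδ) hβ₀
    · intro β _
      group
    · intro δ _
      group
    · intro β hβ
      have hcond : (ospAct β⁻¹ ρ = μ) ↔ (ospAct (β₀ * β⁻¹)⁻¹ t = ρ) := by
        rw [mul_inv_rev, inv_inv, ospAct_mul, hβ₀t]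
        constructor
        · intro h
          rw [← h, ospAct_act_inv]
        · intro h
          rw [← h, ospAct_inv_act]
      have hsgn : ((Equiv.Perm.sign β : ℤ) : ℝ)
          = ((Equiv.Perm.sign β₀ : ℤ) : ℝ) * ((Equiv.Perm.sign (β₀ * β⁻¹) : ℤ) : ℝ) := by
        rw [sign_val_mul, ← mul_assoc, sign_sq, one_mul]
        rw [Equiv.Perm.sign_inv]
      by_cases h : ospAct β⁻¹ ρ = μ
      · rw [if_pos h, if_pos (hcond.1 h), ← hsgn]
      · rw [if_neg h, if_neg (fun hh => h (hcond.2 hh)), mul_zero]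

lemma kappa_eq (t : OSP n ℓ γ) (w : OSP n ℓ γ → ℝ) (ρ : OSP n ℓ γ) :
    (∑ β ∈ colGroup t, ((Equiv.Perm.sign β : ℤ) : ℝ) * w (ospAct β⁻¹ ρ))
      = dot w (polytabloid t) * polytabloid t ρ := by
  classical
  have hexp : ∀ β : Equiv.Perm (Fin n),
      w (ospAct β⁻¹ ρ) = ∑ μ, (if ospAct β⁻¹ ρ = μ then (1:ℝ) else 0) * w μ := by
    intro β
    rw [Finset.sum_eq_single (ospAct β⁻¹ ρ)]
    · simp
    · intro μ _ hne
      rw [if_neg (fun h => hne h.symm), zero_mul]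
    · intro h; exact absurd (Finset.mem_univ _) h
  calc (∑ β ∈ colGroup t, ((Equiv.Perm.sign β : ℤ) : ℝ) * w (ospAct β⁻¹ ρ))
      = ∑ β ∈ colGroup t, ∑ μ,
          (if ospAct β⁻¹ ρ = μ then ((Equiv.Perm.sign β : ℤ) : ℝ) else 0) * w μ := by
        apply Finset.sum_congr rfl
        intro β _
        rw [hexp β, Finset.mul_sum]
        apply Finset.sum_congr rfl
        intro μ _
        split <;> ring
    _ = ∑ μ, (∑ β ∈ colGroup t,
          (if ospAct β⁻¹ ρ = μ then ((Equiv.Perm.sign β : ℤ) : ℝ) else 0)) * w μ := by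
        rw [Finset.sum_comm]
        apply Finset.sum_congr rfl
        intro μ _
        rw [Finset.sum_mul]
    _ = ∑ μ, (polytabloid t μ * polytabloid t ρ) * w μ := by
        apply Finset.sum_congr rfl
        intro μ _
        rw [kappa_matrix]
    _ = dot w (polytabloid t) * polytabloid t ρ := by
        unfold dot
        rw [Finset.sum_mul]
        apply Finset.sum_congr rfl
        intro μ _
        ring

end SLB

namespace SLB

open Finset Equiv

variable {n ℓ : ℕ} {γ : Fin ℓ → ℕ}

/-! ### digit-dominance measure -/

lemma geo_sum (B : ℕ) (hB : 1 ≤ B) : ∀ m : ℕ, ∑ k ∈ Finset.range m, (B - 1) * B ^ k = B ^ m - 1 := by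
  intro m
  induction m with
  | zero => simp
  | succ m ih =>
    rw [Finset.sum_range_succ, ih, pow_succ]
    have hP : 1 ≤ B ^ m := Nat.one_le_pow _ _ hB
    have e : (B - 1) * B ^ m = B ^ m * B - B ^ m := by
      rw [Nat.sub_mul, one_mul, mul_comm]
    have hle : B ^ m ≤ B ^ m * B := Nat.le_mul_of_pos_right _ (by omega)
    omega

lemma sum_fin_lt_eq (h : ℕ → ℕ) (x : Fin n) :
    ∑ y ∈ Finset.univ.filter (fun y : Fin n => y < x), h y.val
      = ∑ k ∈ Finset.range x.val, h k := by
  rw [Finset.sum_filter]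
  have e1 : (∑ y : Fin n, if y < x then h y.val else 0)
      = ∑ y : Fin n, (fun k => if k < x.val then h k else 0) y.val := by
    apply Finset.sum_congr rfl
    intro y _
    simp only [Fin.lt_def]
  rw [e1, Fin.sum_univ_eq_sum_range (fun k => if k < x.val then h k else 0) n,
    ← Finset.sum_filter]
  have e2 : (Finset.range n).filter (fun k => k < x.val) = Finset.range x.val := by
    ext k
    simp only [Finset.mem_filter, Finset.mem_range]
    have := x.isLt
    omega
  rw [e2]

lemma digit_lt {B : ℕ} (hB : 1 ≤ B) (f g : Fin n → ℕ) (hf : ∀ y, f y < B) (x : Fin n)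
    (hx : f x < g x) (hagree : ∀ y, x < y → f y = g y) :
    ∑ y, f y * B ^ y.val < ∑ y, g y * B ^ y.val := by
  have key : ∀ F : Fin n → ℕ, (∑ y, F y)
      = (∑ y ∈ Finset.univ.filter fun y => y < x, F y)
        + (F x + ∑ y ∈ Finset.univ.filter fun y => x < y, F y) := by
    intro F
    rw [← Finset.sum_filter_add_sum_filter_not Finset.univ (fun y => y < x) F]
    congr 1
    have hins : Finset.univ.filter (fun y : Fin n => ¬ y < x)
        = insert x (Finset.univ.filter fun y => x < y) := by
      ext z
      simp only [Finset.mem_filter, Finset.mem_univ, true_and, Finset.mem_insert, not_lt]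
      constructor
      · intro h
        rcases eq_or_lt_of_le h with h' | h'
        · exact Or.inl h'.symm
        · exact Or.inr h'
      · rintro (rfl | h)
        · exact le_refl _
        · exact le_of_lt h
    rw [hins, Finset.sum_insert (by simp)]
  have h1 : (∑ y ∈ Finset.univ.filter fun y : Fin n => y < x, f y * B ^ y.val) < B ^ x.val := by
    have hle : (∑ y ∈ Finset.univ.filter fun y : Fin n => y < x, f y * B ^ y.val)
        ≤ ∑ y ∈ Finset.univ.filter fun y : Fin n => y < x, (B - 1) * B ^ y.val := by
      apply Finset.sum_le_sum
      intro y _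
      have := hf y
      exact Nat.mul_le_mul_right _ (by omega)
    have he : (∑ y ∈ Finset.univ.filter fun y : Fin n => y < x, (B - 1) * B ^ y.val)
        = B ^ x.val - 1 := by
      rw [sum_fin_lt_eq (fun k => (B - 1) * B ^ k) x, geo_sum B hB]
    have hp : 1 ≤ B ^ x.val := Nat.one_le_pow _ _ hB
    omega
  have h2 : f x * B ^ x.val + B ^ x.val ≤ g x * B ^ x.val := by
    have : (f x + 1) * B ^ x.val ≤ g x * B ^ x.val :=
      Nat.mul_le_mul_right _ (by omega)
    rw [add_mul, one_mul] at this
    exact this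
  have h3 : (∑ y ∈ Finset.univ.filter fun y : Fin n => x < y, f y * B ^ y.val)
      = ∑ y ∈ Finset.univ.filter fun y : Fin n => x < y, g y * B ^ y.val := by
    apply Finset.sum_congr rfl
    intro y hy
    simp only [Finset.mem_filter, Finset.mem_univ, true_and] at hy
    rw [hagree y hy]
  have kf := key (fun y => f y * B ^ y.val)
  have kg := key (fun y => g y * B ^ y.val)
  rw [kf, kg]
  omega

/-! ### the order on ordered set partitions -/

def LtO (π τ : OSP n ℓ γ) : Prop :=
  ∃ x, π.1 x < τ.1 x ∧ ∀ y, x < y → π.1 y = τ.1 y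

def mOSP (μ : OSP n ℓ γ) : ℕ := ∑ x, (μ.1 x).val * (ℓ + 1) ^ x.val

lemma mOSP_lt {π τ : OSP n ℓ γ} (h : LtO π τ) : mOSP π < mOSP τ := by
  obtain ⟨x, hx, hagree⟩ := h
  exact digit_lt (Nat.le_add_left 1 ℓ) _ _
    (fun y => Nat.lt_succ_of_lt (Fin.is_lt _)) x hx
    (fun y hy => congrArg Fin.val (hagree y hy))

/-- the key triangularity lemma: for standard `τ` and a nontrivial column-group move,
the resulting tabloid is strictly smaller. -/
lemma ltO_of_colGroup {τ : OSP n ℓ γ} (hstd : IsStandard τ) {β : Equiv.Perm (Fin n)}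
    (hβ : β ∈ colGroup τ) (hne : ospAct β⁻¹ τ ≠ τ) : LtO (ospAct β⁻¹ τ) τ := by
  classical
  have hβc : ∀ z, colOf τ (β z) = colOf τ z := mem_colGroup.1 hβ
  set S := Finset.univ.filter fun z => τ.1 (β z) ≠ τ.1 z with hSdef
  have hSne : S.Nonempty := by
    by_contra hc
    rw [Finset.not_nonempty_iff_eq_empty] at hc
    apply hne
    apply act_eq_self_of_fix
    intro z
    by_contra hz
    have : z ∈ S := by simp [hSdef, hz]
    rw [hc] at this
    exact absurd this (Finset.notMem_empty z)
  set x' := S.max' hSne with hx'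
  have hx'S : x' ∈ S := S.max'_mem hSne
  have hx'ne : τ.1 (β x') ≠ τ.1 x' := by
    have := hx'S
    simp only [hSdef, Finset.mem_filter, Finset.mem_univ, true_and] at this
    exact this
  have hmax : ∀ y, x' < y → τ.1 (β y) = τ.1 y := by
    intro y hy
    by_contra hc
    have : y ∈ S := by simp [hSdef, hc]
    have := Finset.le_max' S y this
    rw [← hx'] at this
    exact absurd hy (not_lt.2 this)
  rcases lt_or_gt_of_ne hx'ne with hlt | hgt
  · -- τ (β x') < τ x' : done
    exact ⟨x', by simpa [Equiv.Perm.inv_def] using hlt, fun y hy => by simpa [Equiv.Perm.inv_def] using hmax y hy⟩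
  · -- τ x' < τ (β x') : contradiction
    exfalso
    set i := τ.1 x'
    set j := τ.1 (β x')
    set c := colOf τ x' with hc
    set y := β x' with hy
    have hcy : colOf τ y = c := hβc x'
    set A := Finset.univ.filter fun z => colOf τ z = c ∧ j ≤ τ.1 z with hA
    set B := Finset.univ.filter fun z => colOf τ z = c ∧ j ≤ τ.1 (β z) with hB
    have cardAB : B.card = A.card := by
      apply Finset.card_bij (fun z _ => β z)
      · intro z hz
        simp only [hA, hB, Finset.mem_filter, Finset.mem_univ, true_and] at hz ⊢
        exact ⟨(hβc z).trans hz.1, hz.2⟩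
      · intro a _ b _ hab
        exact β.injective hab
      · intro a ha
        simp only [hA, Finset.mem_filter, Finset.mem_univ, true_and] at ha
        refine ⟨β⁻¹ a, ?_, by simp⟩
        simp only [hB, Finset.mem_filter, Finset.mem_univ, true_and]
        constructor
        · have := hβc (β⁻¹ a)
          simp only [← Equiv.Perm.mul_apply, mul_inv_cancel, Equiv.Perm.one_apply] at this
          rw [← this, ha.1]
        · simpa using ha.2
    have hyA : y ∈ A := by
      simp only [hA, Finset.mem_filter, Finset.mem_univ, true_and]
      exact ⟨hcy, le_refl _⟩
    have hx'notA : x' ∉ A := by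
      simp only [hA, Finset.mem_filter, Finset.mem_univ, true_and]
      intro hmem
      first
      | exact absurd hmem (not_le.2 hgt)
      | exact absurd hmem.2 (not_le.2 hgt)
    have hins : insert x' (A.erase y) ⊆ B := by
      intro z hz
      rcases Finset.mem_insert.1 hz with rfl | hz'
      · simp only [hB, Finset.mem_filter, Finset.mem_univ, true_and]
        first
        | exact ⟨rfl, le_refl _⟩
        | exact le_refl _
        | exact ⟨rfl, le_refl _, trivial⟩
      · have hzy : z ≠ y := Finset.ne_of_mem_erase hz'
        have hzA := Finset.mem_of_mem_erase hz'
        simp only [hA, Finset.mem_filter, Finset.mem_univ, true_and] at hzA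
        have hx'z : x' < z := hstd x' z (hzA.1.symm ▸ rfl) (lt_of_lt_of_le hgt hzA.2)
        simp only [hB, Finset.mem_filter, Finset.mem_univ, true_and]
        exact ⟨hzA.1, (hmax z hx'z) ▸ hzA.2⟩
    have hcards : (insert x' (A.erase y)).card = A.card := by
      rw [Finset.card_insert_of_notMem (fun hmem => hx'notA (Finset.mem_of_mem_erase hmem)),
        Finset.card_erase_of_mem hyA]
      have : 1 ≤ A.card := Finset.card_pos.2 ⟨y, hyA⟩
      omega
    have heq : insert x' (A.erase y) = B := by
      apply Finset.eq_of_subset_of_card_le hins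
      rw [cardAB, hcards]
    have hyB : y ∈ B := by
      have hx'y : x' < y := hstd x' y hcy.symm hgt
      have h5 : τ.1 (β y) = τ.1 y := hmax y hx'y
      simp only [hB, Finset.mem_filter, Finset.mem_univ, true_and]
      exact ⟨hcy, by rw [h5]⟩
    rw [← heq] at hyB
    rcases Finset.mem_insert.1 hyB with h | h
    · exact hx'ne (congrArg (fun z => τ.1 z) h)
    · exact Finset.notMem_erase y A h

/-! ### vanishing of standard-supported vectors orthogonal to standard polytabloids -/

lemma eq_zero_of_dot_std (x : OSP n ℓ γ → ℝ)
    (hsupp : ∀ ρ, x ρ ≠ 0 → IsStandard ρ)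
    (hdot : ∀ τ, IsStandard τ → dot x (polytabloid τ) = 0) : x = 0 := by
  classical
  by_contra hx
  have hne : ∃ ρ, x ρ ≠ 0 := by
    by_contra hc
    push_neg at hc
    exact hx (funext fun ρ => hc ρ)
  set S := Finset.univ.filter fun ρ => x ρ ≠ 0 with hSdef
  have hSne : S.Nonempty := hne.elim fun ρ hρ => ⟨ρ, by simp [hSdef, hρ]⟩
  obtain ⟨τ, hτS, hmin⟩ := Finset.exists_min_image S mOSP hSne
  have hxτ : x τ ≠ 0 := by
    simp only [hSdef, Finset.mem_filter, Finset.mem_univ, true_and] at hτS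
    exact hτS
  have hstd : IsStandard τ := hsupp τ hxτ
  have hkey : dot x (polytabloid τ) = x τ := by
    unfold dot
    rw [Finset.sum_eq_single τ]
    · rw [poly_self, mul_one]
    · intro ρ _ hne'
      by_cases hxρ : x ρ = 0
      · rw [hxρ, zero_mul]
      by_cases hq : polytabloid τ ρ = 0
      · rw [hq, mul_zero]
      exfalso
      obtain ⟨β, hβ, hβt⟩ := poly_ne_zero_exists hq
      have hlt : LtO ρ τ := by
        rw [← hβt]
        exact ltO_of_colGroup hstd hβ (by rw [hβt]; exact hne')
      have h1 : mOSP ρ < mOSP τ := mOSP_lt hlt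
      have h2 : mOSP τ ≤ mOSP ρ := hmin ρ (by simp [hSdef, hxρ])
      omega
    · intro h
      exact absurd (Finset.mem_univ τ) h
  rw [hdot τ hstd] at hkey
  exact hxτ hkey.symm

end SLB

namespace SLB

open Finset Equiv

variable {n ℓ : ℕ} {γ : Fin ℓ → ℕ}

/-! ### general tableaux -/

structure Tab (n ℓ : ℕ) (γ : Fin ℓ → ℕ) where
  row : Fin n → Fin ℓ
  col : Fin n → ℕ
  col_lt : ∀ x, col x < γ (row x)
  uniq : ∀ x y, row x = row y → col x = col y → x = y
  surj : ∀ (j : Fin ℓ) (c : ℕ), c < γ j → ∃ x, row x = j ∧ col x = c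

def Tab.rows (t : Tab n ℓ γ) : OSP n ℓ γ :=
  ⟨t.row, by
    intro j
    rw [show γ j = (Finset.range (γ j)).card from (Finset.card_range _).symm]
    apply Finset.card_bij (fun x _ => t.col x)
    · intro a ha
      simp only [Finset.mem_filter, Finset.mem_univ, true_and] at ha
      rw [Finset.mem_range, ← ha]
      exact t.col_lt a
    · intro a ha b hb hab
      simp only [Finset.mem_filter, Finset.mem_univ, true_and] at ha hb
      exact t.uniq a b (ha.trans hb.symm) hab
    · intro c hc
      obtain ⟨x, hx1, hx2⟩ := t.surj j c (Finset.mem_range.1 hc)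
      exact ⟨x, by simp [hx1], hx2⟩⟩

@[simp] lemma Tab.rows_apply (t : Tab n ℓ γ) (x : Fin n) : t.rows.1 x = t.row x := rfl

def CGt (t : Tab n ℓ γ) : Finset (Equiv.Perm (Fin n)) :=
  Finset.univ.filter fun β => ∀ x : Fin n, t.col (β x) = t.col x

lemma mem_CGt {t : Tab n ℓ γ} {β : Equiv.Perm (Fin n)} :
    β ∈ CGt t ↔ ∀ x, t.col (β x) = t.col x := by simp [CGt]

lemma one_mem_CGt (t : Tab n ℓ γ) : (1 : Equiv.Perm (Fin n)) ∈ CGt t :=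
  mem_CGt.2 fun _ => rfl

lemma mul_mem_CGt {t : Tab n ℓ γ} {α β : Equiv.Perm (Fin n)}
    (hα : α ∈ CGt t) (hβ : β ∈ CGt t) : α * β ∈ CGt t := by
  rw [mem_CGt] at *
  intro x
  simpa using (hα (β x)).trans (hβ x)

lemma inv_mem_CGt {t : Tab n ℓ γ} {β : Equiv.Perm (Fin n)}
    (hβ : β ∈ CGt t) : β⁻¹ ∈ CGt t := by
  rw [mem_CGt] at *
  intro x
  have := hβ (β⁻¹ x)
  simpa using this.symm

/-- the polytabloid of a general tableau -/
def ET (t : Tab n ℓ γ) : OSP n ℓ γ → ℝ :=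
  fun ρ => ∑ β ∈ CGt t, if ospAct β⁻¹ t.rows = ρ then ((Equiv.Perm.sign β : ℤ) : ℝ) else 0

def canonTab (μ : OSP n ℓ γ) : Tab n ℓ γ where
  row := μ.1
  col := colOf μ
  col_lt := colOf_lt μ
  uniq := fun x y h1 h2 => colOf_injOn h1 h2
  surj := fun j c hc => exists_cell μ j hc

lemma canonTab_rows (μ : OSP n ℓ γ) : (canonTab μ).rows = μ := osp_ext fun _ => rfl

lemma ET_canon (μ : OSP n ℓ γ) : ET (canonTab μ) = polytabloid μ := by
  funext ρ
  unfold ET polytabloid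
  rw [show CGt (canonTab μ) = colGroup μ from rfl, canonTab_rows]

lemma ET_congr {t s : Tab n ℓ γ} (hrow : ∀ x, t.row x = s.row x)
    (hcol : ∀ x, t.col x = s.col x) : ET t = ET s := by
  have h1 : CGt t = CGt s := by
    apply Finset.filter_congr
    intro β _
    constructor
    · intro h x; rw [← hcol (β x), ← hcol x, h x]
    · intro h x; rw [hcol (β x), hcol x, h x]
  have h2 : t.rows = s.rows := osp_ext fun x => by
    rw [Tab.rows_apply, Tab.rows_apply, hrow]
  funext ρ
  unfold ET
  rw [h2]
  apply Finset.sum_congr h1 (fun _ _ => rfl)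

def tabPerm (σ : Equiv.Perm (Fin n)) (t : Tab n ℓ γ) : Tab n ℓ γ where
  row x := t.row (σ⁻¹ x)
  col x := t.col (σ⁻¹ x)
  col_lt x := t.col_lt _
  uniq := fun x y h1 h2 => by
    have := t.uniq _ _ h1 h2
    exact σ⁻¹.injective this
  surj := fun j c hc => by
    obtain ⟨x, hx1, hx2⟩ := t.surj j c hc
    exact ⟨σ x, by simpa using ⟨hx1, hx2⟩⟩

lemma tabPerm_rows (σ : Equiv.Perm (Fin n)) (t : Tab n ℓ γ) :
    (tabPerm σ t).rows = ospAct σ t.rows :=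
  osp_ext fun x => by
    rw [Tab.rows_apply]
    show t.row (σ⁻¹ x) = (ospAct σ t.rows).1 x
    rw [ospAct_apply, Tab.rows_apply]
    rfl

lemma mem_CGt_tabPerm {σ β : Equiv.Perm (Fin n)} {t : Tab n ℓ γ} :
    β ∈ CGt (tabPerm σ t) ↔ σ⁻¹ * β * σ ∈ CGt t := by
  rw [mem_CGt, mem_CGt]
  constructor
  · intro h x
    have := h (σ x)
    simp only [tabPerm] at this
    simpa using this
  · intro h x
    have := h (σ⁻¹ x)
    simp only [tabPerm]
    simpa [mul_assoc] using this

/-- entry permutation: `pAct σ (ET t) = ET (tabPerm σ t)` -/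
lemma pAct_ET (σ : Equiv.Perm (Fin n)) (t : Tab n ℓ γ) :
    pAct σ (ET t) = ET (tabPerm σ t) := by
  funext ρ
  show ET t (ospAct σ⁻¹ ρ) = ET (tabPerm σ t) ρ
  unfold ET
  apply Finset.sum_nbij' (i := fun β => σ * β * σ⁻¹) (j := fun β' => σ⁻¹ * β' * σ)
  · intro β hβ
    rw [mem_CGt_tabPerm]
    simpa [mul_assoc] using hβ
  · intro β' hβ'
    rw [mem_CGt_tabPerm] at hβ'
    exact hβ'
  · intro β _
    group
  · intro β' _
    group
  · intro β hβ
    have hcond : (ospAct β⁻¹ t.rows = ospAct σ⁻¹ ρ)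
        ↔ (ospAct (σ * β * σ⁻¹)⁻¹ (tabPerm σ t).rows = ρ) := by
      rw [tabPerm_rows]
      rw [show (σ * β * σ⁻¹)⁻¹ = σ * β⁻¹ * σ⁻¹ by group]
      rw [ospAct_mul, ospAct_mul, ospAct_inv_act]
      constructor
      · intro h
        rw [h, ospAct_act_inv]
      · intro h
        have := congrArg (ospAct σ⁻¹) h
        rw [ospAct_inv_act] at this
        rw [← this]
    have hsgn : ((Equiv.Perm.sign β : ℤ) : ℝ)
        = ((Equiv.Perm.sign (σ * β * σ⁻¹) : ℤ) : ℝ) := by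
      rw [Equiv.Perm.sign_mul, Equiv.Perm.sign_mul, Equiv.Perm.sign_inv]
      rcases Int.units_eq_one_or (Equiv.Perm.sign σ) with h | h <;>
        rcases Int.units_eq_one_or (Equiv.Perm.sign β) with h' | h' <;>
          simp [h, h']
    by_cases h : ospAct β⁻¹ t.rows = ospAct σ⁻¹ ρ
    · rw [if_pos h, if_pos (hcond.1 h), hsgn]
    · rw [if_neg h, if_neg (fun hh => h (hcond.2 hh))]

/-- sign lemma: acting by an element of the column group multiplies `ET` by its sign. -/
lemma pAct_ET_sign {t : Tab n ℓ γ} {π : Equiv.Perm (Fin n)} (hπ : π ∈ CGt t) :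
    pAct π (ET t) = fun ρ => ((Equiv.Perm.sign π : ℤ) : ℝ) * ET t ρ := by
  funext ρ
  show ET t (ospAct π⁻¹ ρ) = _
  unfold ET
  rw [Finset.mul_sum]
  apply Finset.sum_nbij' (i := fun β => β * π⁻¹) (j := fun δ => δ * π)
  · intro β hβ
    exact mul_mem_CGt hβ (inv_mem_CGt hπ)
  · intro δ hδ
    exact mul_mem_CGt hδ hπ
  · intro β _
    group
  · intro δ _
    group
  · intro β hβ
    have hcond : (ospAct β⁻¹ t.rows = ospAct π⁻¹ ρ) ↔ (ospAct (β * π⁻¹)⁻¹ t.rows = ρ) := by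
      rw [show (β * π⁻¹)⁻¹ = π * β⁻¹ by group, ospAct_mul]
      constructor
      · intro h
        rw [h, ospAct_act_inv]
      · intro h
        have := congrArg (ospAct π⁻¹) h
        rw [ospAct_inv_act] at this
        rw [← this]
    have hsgn : ((Equiv.Perm.sign β : ℤ) : ℝ)
        = ((Equiv.Perm.sign π : ℤ) : ℝ) * ((Equiv.Perm.sign (β * π⁻¹) : ℤ) : ℝ) := by
      rw [Equiv.Perm.sign_mul, Equiv.Perm.sign_inv]
      rcases Int.units_eq_one_or (Equiv.Perm.sign π) with h | h <;>
        rcases Int.units_eq_one_or (Equiv.Perm.sign β) with h' | h' <;>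
          simp [h, h']
    by_cases h : ospAct β⁻¹ t.rows = ospAct π⁻¹ ρ
    · rw [if_pos h, if_pos (hcond.1 h), ← hsgn]
    · rw [if_neg h, if_neg (fun hh => h (hcond.2 hh)), mul_zero]

/-- cell-compatible transitivity -/
lemma exists_compat (μ t : OSP n ℓ γ) : ∃ σ : Equiv.Perm (Fin n),
    ospAct σ t = μ ∧ ∀ x, colOf μ (σ x) = colOf t x := by
  classical
  set g : Fin n → Fin n := fun x => cellElem μ (t.1 x) (colOf t x) (colOf_lt t x) with hg
  have hrow : ∀ x, μ.1 (g x) = t.1 x := fun x => cellElem_row _ _ _ _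
  have hcol : ∀ x, colOf μ (g x) = colOf t x := fun x => cellElem_col _ _ _ _
  have hginj : Function.Injective g := by
    intro a b hab
    have h1 : t.1 a = t.1 b := by rw [← hrow a, ← hrow b, hab]
    have h2 : colOf t a = colOf t b := by rw [← hcol a, ← hcol b, hab]
    exact colOf_injOn h1 h2
  let σ : Equiv.Perm (Fin n) := Equiv.ofBijective g (Finite.injective_iff_bijective.mp hginj)
  have hσapp : ∀ x, σ x = g x := fun x => rfl
  refine ⟨σ, ?_, fun x => by rw [hσapp, hcol]⟩
  apply osp_ext
  intro x
  rw [ospAct_apply]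
  have h := hrow (σ.symm x)
  have h2 : g (σ.symm x) = x := by rw [← hσapp]; simp
  rw [h2] at h
  exact h.symm

/-- compatibility version: `pAct` maps polytabloids to polytabloids. -/
lemma pAct_polytabloid (t μ : OSP n ℓ γ) :
    ∃ σ : Equiv.Perm (Fin n), pAct σ (polytabloid t) = polytabloid μ := by
  obtain ⟨σ, hσ1, hσ2⟩ := exists_compat μ t
  refine ⟨σ, ?_⟩
  rw [← ET_canon t, pAct_ET, ← ET_canon μ]
  apply ET_congr
  · intro x
    show (canonTab t).row (σ⁻¹ x) = μ.1 x
    show t.1 (σ⁻¹ x) = μ.1 x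
    conv_rhs => rw [← hσ1]
    rw [ospAct_apply]
    rfl
  · intro x
    show colOf t (σ⁻¹ x) = colOf μ x
    conv_rhs => rw [show x = σ (σ⁻¹ x) by simp]
    rw [hσ2]

end SLB

namespace SLB

open Finset Equiv

variable {n ℓ : ℕ} {γ : Fin ℓ → ℕ}

lemma ospAct_swap_eq {ν : OSP n ℓ γ} {u w : Fin n} (h : ν.1 u = ν.1 w) :
    ospAct (Equiv.swap u w) ν = ν := by
  apply osp_ext
  intro z
  rw [ospAct_apply, Equiv.symm_swap]
  by_cases h1 : z = u
  · rw [h1, Equiv.swap_apply_left]; exact h.symm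
  by_cases h2 : z = w
  · rw [h2, Equiv.swap_apply_right]; exact h
  · rw [Equiv.swap_apply_of_ne_of_ne h1 h2]

/-! ### column sorting by swaps -/

def ColSorted (t : Tab n ℓ γ) : Prop :=
  ∀ x y : Fin n, t.col x = t.col y → x < y → t.row x < t.row y

def invs (t : Tab n ℓ γ) : Finset (Fin n × Fin n) :=
  Finset.univ.filter fun p => p.1 < p.2 ∧ t.col p.1 = t.col p.2 ∧ t.row p.2 < t.row p.1

def minv (t : Tab n ℓ γ) : ℕ := (invs t).card

def mcol (t : Tab n ℓ γ) : ℕ := ∑ x, t.col x * (n + 1) ^ x.val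

lemma minv_le (t : Tab n ℓ γ) : minv t ≤ n * n := by
  unfold minv invs
  calc (Finset.univ.filter _).card ≤ (Finset.univ : Finset (Fin n × Fin n)).card :=
        Finset.card_filter_le _ _
    _ = n * n := by simp [Finset.card_univ]

lemma colsorted_of_minv_zero {t : Tab n ℓ γ} (h : minv t = 0) : ColSorted t := by
  intro x y hcol hxy
  have hxyne : t.row x ≠ t.row y := fun hr => (ne_of_lt hxy) (t.uniq x y hr hcol)
  rcases lt_or_gt_of_ne hxyne with h' | h'
  · exact h'
  · exfalso
    have : (x, y) ∈ invs t := by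
      simp only [invs, Finset.mem_filter, Finset.mem_univ, true_and]
      exact ⟨hxy, hcol, h'⟩
    rw [Finset.card_eq_zero.1 h] at this
    exact absurd this (Finset.notMem_empty _)

lemma colsorted_lt {t : Tab n ℓ γ} (hsort : ColSorted t) {x y : Fin n}
    (hcol : t.col x = t.col y) (hrow : t.row x < t.row y) : x < y := by
  by_contra hc
  push_neg at hc
  rcases eq_or_lt_of_le hc with h' | h'
  · rw [h'] at hrow; exact lt_irrefl _ hrow
  · exact absurd hrow (not_lt.2 (le_of_lt (hsort y x hcol.symm h')))

lemma swap_step (t : Tab n ℓ γ) (h : 0 < minv t) :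
    ∃ t' : Tab n ℓ γ, (∀ ρ, ET t ρ = - ET t' ρ) ∧ (∀ z, t'.col z = t.col z) ∧
      minv t' < minv t := by
  classical
  have hne : (invs t).Nonempty := Finset.card_pos.1 h
  obtain ⟨p0, hp0, hpmin⟩ := Finset.exists_min_image (invs t) (fun p => p.2.val - p.1.val) hne
  obtain ⟨a, b⟩ := p0
  simp only [invs, Finset.mem_filter, Finset.mem_univ, true_and] at hp0
  obtain ⟨hab, hcolab, hrowba⟩ := hp0
  have hbetween : ∀ z, a < z → z < b → t.col z ≠ t.col a := by
    intro z haz hzb hcz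
    have hznea : t.row z ≠ t.row a := fun hr => (ne_of_gt haz) (t.uniq z a hr hcz)
    rcases lt_or_gt_of_ne hznea with h' | h'
    · have hmem : (a, z) ∈ invs t := by
        simp only [invs, Finset.mem_filter, Finset.mem_univ, true_and]
        exact ⟨haz, hcz.symm, h'⟩
      have := hpmin _ hmem
      simp only at this
      omega
    · have hmem : (z, b) ∈ invs t := by
        simp only [invs, Finset.mem_filter, Finset.mem_univ, true_and]
        exact ⟨hzb, hcz.trans hcolab, lt_trans hrowba h'⟩
      have := hpmin _ hmem
      simp only at this
      omega
  set s : Equiv.Perm (Fin n) := Equiv.swap a b with hs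
  have hscol : ∀ z, t.col (s z) = t.col z := by
    intro z
    by_cases h1 : z = a
    · rw [h1, hs, Equiv.swap_apply_left]; exact hcolab.symm
    by_cases h2 : z = b
    · rw [h2, hs, Equiv.swap_apply_right]; exact hcolab
    · rw [hs, Equiv.swap_apply_of_ne_of_ne h1 h2]
  have hsCG : s ∈ CGt t := mem_CGt.2 hscol
  have hssymm : s⁻¹ = s := by rw [hs]; exact Equiv.swap_inv a b
  refine ⟨tabPerm s t, ?_, ?_, ?_⟩
  · intro ρ
    have h1 : pAct s (ET t) = ET (tabPerm s t) := pAct_ET s t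
    have h2 : pAct s (ET t) = fun ρ => ((Equiv.Perm.sign s : ℤ) : ℝ) * ET t ρ :=
      pAct_ET_sign hsCG
    have h3 : ((Equiv.Perm.sign s : ℤ) : ℝ) = -1 := by
      rw [hs, Equiv.Perm.sign_swap (ne_of_lt hab)]; norm_num
    have h4 := congrFun (h1.symm.trans h2) ρ
    rw [h3] at h4
    rw [h4]; ring
  · intro z
    show t.col (s⁻¹ z) = t.col z
    rw [hssymm, hscol]
  · have habI : (a, b) ∈ invs t := by
      simp only [invs, Finset.mem_filter, Finset.mem_univ, true_and]
      exact ⟨hab, hcolab, hrowba⟩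
    have hcard : (invs (tabPerm s t)).card ≤ ((invs t).erase (a, b)).card := by
      apply Finset.card_le_card_of_injOn (fun p => (s p.1, s p.2))
      · intro p hpm
        simp only [invs, Finset.mem_coe, Finset.mem_filter, Finset.mem_univ, true_and] at hpm
        obtain ⟨huw, hcuw, hruw⟩ := hpm
        have hcuw' : t.col p.1 = t.col p.2 := by
          have hcx := hcuw
          simp only [tabPerm] at hcx
          rw [hssymm, hscol, hscol] at hcx
          exact hcx
        have hruw' : t.row (s p.2) < t.row (s p.1) := by
          have hrx := hruw
          simp only [tabPerm] at hrx
          rw [hssymm] at hrx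
          exact hrx
        have hpab : ¬(p.1 = a ∧ p.2 = b) := by
          rintro ⟨h1, h2⟩
          rw [h1, h2] at hruw'
          rw [hs, Equiv.swap_apply_left, Equiv.swap_apply_right] at hruw'
          exact absurd hruw' (not_lt.2 (le_of_lt hrowba))
        have hsuw : s p.1 < s p.2 := by
          by_cases h1 : p.1 = a
          · have h2 : p.2 ≠ b := fun hh => hpab ⟨h1, hh⟩
            have hp2a : a < p.2 := h1 ▸ huw
            have hcp2 : t.col p.2 = t.col a := by rw [← hcuw', h1]
            have hbp2 : b < p.2 := by
              rcases lt_trichotomy p.2 b with hlt | heq | hgt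
              · exact absurd hcp2 (hbetween p.2 hp2a hlt)
              · exact absurd heq h2
              · exact hgt
            rw [h1, hs, Equiv.swap_apply_left,
              Equiv.swap_apply_of_ne_of_ne (ne_of_gt hp2a) h2]
            exact hbp2
          by_cases h2 : p.1 = b
          · have hp2b : b < p.2 := h2 ▸ huw
            have h3 : p.2 ≠ a := fun hh => absurd (hh ▸ hp2b) (not_lt.2 (le_of_lt hab))
            have h4 : p.2 ≠ b := ne_of_gt hp2b
            rw [h2, hs, Equiv.swap_apply_right,
              Equiv.swap_apply_of_ne_of_ne h3 h4]
            exact lt_trans hab hp2b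
          by_cases h3 : p.2 = a
          · have hp1a : p.1 < a := h3 ▸ huw
            rw [h3, hs, Equiv.swap_apply_left,
              Equiv.swap_apply_of_ne_of_ne h1 h2]
            exact lt_trans hp1a hab
          by_cases h4 : p.2 = b
          · have hp1b : p.1 < b := h4 ▸ huw
            have hcp1 : t.col p.1 = t.col a := by rw [hcuw', h4, hcolab]
            have hp1a : p.1 < a := by
              rcases lt_trichotomy p.1 a with hlt | heq | hgt
              · exact hlt
              · exact absurd heq h1
              · exact absurd hcp1 (hbetween p.1 hgt hp1b)
            rw [h4, hs, Equiv.swap_apply_right,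
              Equiv.swap_apply_of_ne_of_ne h1 h2]
            exact hp1a
          · rw [hs, Equiv.swap_apply_of_ne_of_ne h1 h2,
              Equiv.swap_apply_of_ne_of_ne h3 h4]
            exact huw
        rw [Finset.mem_coe, Finset.mem_erase]
        constructor
        · intro hh
          have h1 : s p.1 = a := congrArg Prod.fst hh
          have h2 : s p.2 = b := congrArg Prod.snd hh
          have h1' : p.1 = b := by
            have hq := congrArg s h1
            rw [hs, Equiv.swap_apply_self, Equiv.swap_apply_left] at hq
            exact hq
          have h2' : p.2 = a := by
            have hq := congrArg s h2
            rw [hs, Equiv.swap_apply_self, Equiv.swap_apply_right] at hq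
            exact hq
          rw [h1', h2'] at huw
          exact absurd hab (not_lt.2 (le_of_lt huw))
        · simp only [invs, Finset.mem_filter, Finset.mem_univ, true_and]
          refine ⟨hsuw, ?_, ?_⟩
          · rw [hscol, hscol]; exact hcuw'
          · exact hruw'
      · intro p _ q _ hpq
        have h1 : s p.1 = s q.1 := congrArg Prod.fst hpq
        have h2 : s p.2 = s q.2 := congrArg Prod.snd hpq
        exact Prod.ext (s.injective h1) (s.injective h2)
    have h5 : 1 ≤ (invs t).card := h
    rw [Finset.card_erase_of_mem habI] at hcard
    unfold minv at *
    omega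

/-! ### standard case -/

lemma ET_standard (t : Tab n ℓ γ) (hsort : ColSorted t)
    (hrowinc : ∀ x y : Fin n, t.row x = t.row y → t.col y = t.col x + 1 → x < y) :
    IsStandard t.rows ∧ ET t = polytabloid t.rows := by
  have chain : ∀ d : ℕ, ∀ x y : Fin n, t.row y = t.row x → t.col y + d + 1 = t.col x →
      y < x := by
    intro d
    induction d with
    | zero =>
      intro x y h1 h2
      exact hrowinc y x h1 (by omega)
    | succ d ih =>
      intro x y h1 h2
      have hc : t.col y + d + 1 < γ (t.row x) := by
        have := t.col_lt x
        omega
      obtain ⟨z, hz1, hz2⟩ := t.surj (t.row x) _ hc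
      have h3 : y < z := ih z y (h1.trans hz1.symm) (by omega)
      have h4 : z < x := hrowinc z x hz1 (by omega)
      exact h3.trans h4
  have hlt_iff : ∀ x y : Fin n, t.row y = t.row x → (t.col y < t.col x ↔ y < x) := by
    intro x y h1
    constructor
    · intro hcc
      obtain ⟨d, hd⟩ : ∃ d, t.col y + d + 1 = t.col x := ⟨t.col x - t.col y - 1, by omega⟩
      exact chain d x y h1 hd
    · intro hyx
      by_contra hc
      push_neg at hc
      rcases eq_or_lt_of_le hc with h' | h'
      · exact (ne_of_lt hyx) (t.uniq y x h1 h'.symm)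
      · obtain ⟨d, hd⟩ : ∃ d, t.col x + d + 1 = t.col y := ⟨t.col y - t.col x - 1, by omega⟩
        exact absurd (chain d y x h1.symm hd) (not_lt.2 (le_of_lt hyx))
  have hcol : ∀ x, colOf t.rows x = t.col x := by
    intro x
    unfold colOf
    have hset : (Finset.univ.filter fun y => t.rows.1 y = t.rows.1 x ∧ y < x)
        = Finset.univ.filter fun y => t.row y = t.row x ∧ t.col y < t.col x := by
      apply Finset.filter_congr
      intro y _
      simp only [Tab.rows_apply]
      constructor
      · rintro ⟨hr, hlt⟩
        exact ⟨hr, (hlt_iff x y hr).2 hlt⟩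
      · rintro ⟨hr, hlt⟩
        exact ⟨hr, (hlt_iff x y hr).1 hlt⟩
    rw [hset]
    conv_rhs => rw [← Finset.card_range (t.col x)]
    apply Finset.card_bij (fun y _ => t.col y)
    · intro y hy
      simp only [Finset.mem_filter, Finset.mem_univ, true_and] at hy
      exact Finset.mem_range.2 hy.2
    · intro y hy z hz hyz
      simp only [Finset.mem_filter, Finset.mem_univ, true_and] at hy hz
      exact t.uniq y z (hy.1.trans hz.1.symm) hyz
    · intro c hc
      rw [Finset.mem_range] at hc
      have : c < γ (t.row x) := lt_trans hc (t.col_lt x)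
      obtain ⟨y, hy1, hy2⟩ := t.surj (t.row x) c this
      refine ⟨y, ?_, hy2⟩
      simp only [Finset.mem_filter, Finset.mem_univ, true_and]
      exact ⟨hy1, by omega⟩
  constructor
  · intro x y hcxy hrxy
    rw [hcol, hcol] at hcxy
    simp only [Tab.rows_apply] at hrxy
    exact colsorted_lt hsort hcxy hrxy
  · rw [← ET_canon t.rows]
    apply ET_congr
    · intro x; rfl
    · intro x
      exact (hcol x).symm

end SLB

namespace SLB

open Finset Equiv

variable {n ℓ : ℕ} {γ : Fin ℓ → ℕ}

noncomputable def pick (AB : Finset (Fin n)) (d : Fin n) (ν : OSP n ℓ γ) : Fin n × Fin n :=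
  if h : ∃ q : Fin n × Fin n, (q.1 ∈ AB ∧ q.2 ∈ AB) ∧ q.1 ≠ q.2 ∧ ν.1 q.1 = ν.1 q.2
  then h.choose else (d, d)

lemma pick_spec {AB : Finset (Fin n)} {d : Fin n} {ν : OSP n ℓ γ}
    (h : ∃ q : Fin n × Fin n, (q.1 ∈ AB ∧ q.2 ∈ AB) ∧ q.1 ≠ q.2 ∧ ν.1 q.1 = ν.1 q.2) :
    ((pick AB d ν).1 ∈ AB ∧ (pick AB d ν).2 ∈ AB) ∧ (pick AB d ν).1 ≠ (pick AB d ν).2 ∧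
      ν.1 (pick AB d ν).1 = ν.1 (pick AB d ν).2 := by
  rw [pick, dif_pos h]
  exact h.choose_spec

lemma mcol_le (hγn : ∀ j, γ j ≤ n) (t : Tab n ℓ γ) : mcol t ≤ (n + 1) ^ n - 1 := by
  have h1 : ∀ x : Fin n, t.col x * (n + 1) ^ x.val ≤ n * (n + 1) ^ x.val := fun x =>
    Nat.mul_le_mul_right _ (by have h2 := t.col_lt x; have h3 := hγn (t.row x); omega)
  calc mcol t ≤ ∑ x : Fin n, n * (n + 1) ^ x.val := Finset.sum_le_sum (fun x _ => h1 x)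
    _ = ∑ k ∈ Finset.range n, n * (n + 1) ^ k :=
        Fin.sum_univ_eq_sum_range (fun k => n * (n + 1) ^ k) n
    _ = ∑ k ∈ Finset.range n, ((n + 1) - 1) * (n + 1) ^ k := by
        apply Finset.sum_congr rfl
        intro k _
        norm_num
    _ = (n + 1) ^ n - 1 := geo_sum (n + 1) (by omega) n

lemma ET_tabPerm_apply (σ : Equiv.Perm (Fin n)) (t : Tab n ℓ γ) (ρ : OSP n ℓ γ) :
    ET (tabPerm σ t) ρ = ∑ β ∈ CGt t,
      if ospAct (σ * β⁻¹) t.rows = ρ then ((Equiv.Perm.sign β : ℤ) : ℝ) else 0 := by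
  rw [← pAct_ET]
  show ET t (ospAct σ⁻¹ ρ) = _
  unfold ET
  apply Finset.sum_congr rfl
  intro β _
  apply if_congr _ rfl rfl
  rw [ospAct_mul]
  constructor
  · intro h
    rw [h, ospAct_act_inv]
  · intro h
    have h2 := congrArg (ospAct σ⁻¹) h
    rwa [ospAct_inv_act] at h2

lemma garnir (hpart : Antitone γ) (hγn : ∀ j, γ j ≤ n) (t : Tab n ℓ γ) (hsort : ColSorted t)
    {a b : Fin n} (hrowab : t.row a = t.row b) (hcolab : t.col b = t.col a + 1)
    (hba : b < a) :
    ∃ (K : ℕ) (F : Finset (Equiv.Perm (Fin n))), 0 < K ∧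
      (∀ σ ∈ F, mcol t < mcol (tabPerm σ t)) ∧
      ∀ ρ, (K : ℝ) * ET t ρ
        = - ∑ σ ∈ F, ((Equiv.Perm.sign σ : ℤ) : ℝ) * ET (tabPerm σ t) ρ := by
  classical
  set r := t.row a with hr
  set c := t.col a with hc
  set A := Finset.univ.filter (fun z => t.col z = c ∧ r ≤ t.row z) with hA
  set B := Finset.univ.filter (fun z => t.col z = c + 1 ∧ t.row z ≤ r) with hB
  set AB := A ∪ B with hAB
  have hmemA : ∀ z, z ∈ A ↔ (t.col z = c ∧ r ≤ t.row z) := by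
    intro z; simp [hA]
  have hmemB : ∀ z, z ∈ B ↔ (t.col z = c + 1 ∧ t.row z ≤ r) := by
    intro z; simp [hB]
  have hdisj : Disjoint A B := by
    rw [Finset.disjoint_left]
    intro z h1 h2
    rw [hmemA] at h1
    rw [hmemB] at h2
    omega
  have haA : a ∈ A := (hmemA a).2 ⟨rfl, le_refl _⟩
  have hbB : b ∈ B := (hmemB b).2 ⟨hcolab, le_of_eq hrowab.symm⟩
  have hABlt : ∀ z ∈ A, ∀ w ∈ B, w < z := by
    intro z hz w hw
    rw [hmemA] at hz
    rw [hmemB] at hw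
    have hza : a ≤ z := by
      rcases eq_or_ne z a with h' | h'
      · exact le_of_eq h'.symm
      · have hrz : r ≠ t.row z := by
          intro hrr
          exact h' (t.uniq z a (hrr.symm.trans hr) (hz.1.trans hc))
        have : t.row a < t.row z := by
          rw [← hr]
          exact lt_of_le_of_ne hz.2 hrz
        exact le_of_lt (colsorted_lt hsort (hc.symm.trans hz.1.symm) this)
    have hwb : w ≤ b := by
      rcases eq_or_ne w b with h' | h'
      · exact le_of_eq h'
      · have hrw : t.row w ≠ t.row b := by
          intro hrr
          exact h' (t.uniq w b hrr (hw.1.trans hcolab.symm))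
        have h2 : t.row w < t.row b := by
          rw [← hrowab]
          rw [← hrowab] at hrw
          exact lt_of_le_of_ne hw.2 hrw
        exact le_of_lt (colsorted_lt hsort (hw.1.trans hcolab.symm) h2)
    calc w ≤ b := hwb
      _ < a := hba
      _ ≤ z := hza
  set GS := Finset.univ.filter
    (fun σ : Equiv.Perm (Fin n) => ∀ z, z ∉ AB → σ z = z) with hGSd
  have hmemGS : ∀ σ : Equiv.Perm (Fin n), σ ∈ GS ↔ ∀ z, z ∉ AB → σ z = z := by
    intro σ; simp [hGSd]
  have hGSinvfix : ∀ σ ∈ GS, ∀ z, z ∉ AB → σ⁻¹ z = z := by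
    intro σ hσ z hz
    have h1 := (hmemGS σ).1 hσ z hz
    conv_lhs => rw [← h1]
    simp
  have hGSmapsAB : ∀ σ ∈ GS, ∀ z ∈ AB, σ z ∈ AB := by
    intro σ hσ z hz
    by_contra hc'
    have h1 : σ (σ z) = σ z := (hmemGS σ).1 hσ _ hc'
    have h2 : σ z = z := σ.injective h1
    rw [h2] at hc'
    exact hc' hz
  have hGSinvmapsAB : ∀ σ ∈ GS, ∀ z ∈ AB, σ⁻¹ z ∈ AB := by
    intro σ hσ z hz
    by_contra hc'
    have h1 : σ⁻¹ (σ⁻¹ z) = σ⁻¹ z := hGSinvfix σ hσ _ hc'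
    have h2 : σ⁻¹ z = z := (σ⁻¹ : Equiv.Perm (Fin n)).injective h1
    rw [h2] at hc'
    exact hc' hz
  set Rc := Finset.univ.filter (fun j : Fin ℓ => c < γ j) with hRcd
  have hcγr : c + 1 < γ r := by
    have h1 := t.col_lt b
    rw [hcolab, ← hrowab] at h1
    exact h1
  have hcardB : B.card = r.val + 1 := by
    rw [← Fin.card_Iic r]
    apply Finset.card_bij (fun z _ => t.row z)
    · intro z hz
      rw [hmemB] at hz
      exact Finset.mem_Iic.2 hz.2
    · intro z hz z' hz' hzz'
      rw [hmemB] at hz hz'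
      exact t.uniq z z' hzz' (hz.1.trans hz'.1.symm)
    · intro j hj
      rw [Finset.mem_Iic] at hj
      have h1 : c + 1 < γ j := lt_of_lt_of_le hcγr (hpart hj)
      obtain ⟨x, hx1, hx2⟩ := t.surj j (c + 1) h1
      refine ⟨x, ?_, hx1⟩
      rw [hmemB]
      exact ⟨hx2, hx1 ▸ hj⟩
  have hcardA : A.card = (Rc.filter (fun j => r ≤ j)).card := by
    apply Finset.card_bij (fun z _ => t.row z)
    · intro z hz
      rw [hmemA] at hz
      simp only [hRcd, Finset.mem_filter, Finset.mem_univ, true_and]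
      refine ⟨?_, hz.2⟩
      have h1 := t.col_lt z
      rw [hz.1] at h1
      exact h1
    · intro z hz z' hz' hzz'
      rw [hmemA] at hz hz'
      exact t.uniq z z' hzz' (hz.1.trans hz'.1.symm)
    · intro j hj
      simp only [hRcd, Finset.mem_filter, Finset.mem_univ, true_and] at hj
      obtain ⟨x, hx1, hx2⟩ := t.surj j c hj.1
      refine ⟨x, ?_, hx1⟩
      rw [hmemA]
      exact ⟨hx2, hx1 ▸ hj.2⟩
  have hRcsplit : Rc.card ≤ A.card + r.val := by
    have h1 := Finset.card_filter_add_card_filter_not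
      (s := Rc) (p := fun j => r ≤ j)
    have h2 : (Rc.filter (fun j => ¬ r ≤ j)).card ≤ (Finset.Iio r).card := by
      apply Finset.card_le_card
      intro j hj
      simp only [Finset.mem_filter, not_le] at hj
      exact Finset.mem_Iio.2 hj.2
    rw [Fin.card_Iio] at h2
    omega
  have hpig : Rc.card < AB.card := by
    rw [hAB, Finset.card_union_of_disjoint hdisj]
    omega
  have hEx : ∀ σ ∈ GS, ∀ β ∈ CGt t,
      ∃ q : Fin n × Fin n, (q.1 ∈ AB ∧ q.2 ∈ AB) ∧ q.1 ≠ q.2 ∧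
        (ospAct (σ * β⁻¹) t.rows).1 q.1 = (ospAct (σ * β⁻¹) t.rows).1 q.2 := by
    intro σ hσ β hβ
    have happ : ∀ z, (ospAct (σ * β⁻¹) t.rows).1 z = t.row (β (σ⁻¹ z)) := by
      intro z
      rw [ospAct_apply]
      have hsy : (σ * β⁻¹).symm = β * σ⁻¹ := by
        rw [← Equiv.Perm.inv_def, mul_inv_rev, inv_inv]
      rw [hsy]
      rfl
    have hmaps : ∀ z ∈ AB, (ospAct (σ * β⁻¹) t.rows).1 z ∈ Rc := by
      intro z hz
      rw [happ]
      simp only [hRcd, Finset.mem_filter, Finset.mem_univ, true_and]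
      have h1 : σ⁻¹ z ∈ AB := hGSinvmapsAB σ hσ z hz
      have h2 : t.col (β (σ⁻¹ z)) = t.col (σ⁻¹ z) := mem_CGt.1 hβ _
      have h3 : c ≤ t.col (σ⁻¹ z) := by
        rcases Finset.mem_union.1 h1 with h' | h'
        · rw [hmemA] at h'
          omega
        · rw [hmemB] at h'
          omega
      have h4 := t.col_lt (β (σ⁻¹ z))
      omega
    obtain ⟨u, hu, w, hw, hne, heq⟩ :=
      Finset.exists_ne_map_eq_of_card_lt_of_maps_to hpig hmaps
    exact ⟨(u, w), ⟨hu, hw⟩, hne, heq⟩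
  -- the Garnir vanishing identity
  have claim0 : ∀ ρ : OSP n ℓ γ,
      (∑ σ ∈ GS, ((Equiv.Perm.sign σ : ℤ) : ℝ) * ET (tabPerm σ t) ρ) = 0 := by
    intro ρ
    have hrw : (∑ σ ∈ GS, ((Equiv.Perm.sign σ : ℤ) : ℝ) * ET (tabPerm σ t) ρ)
        = ∑ q ∈ GS ×ˢ CGt t, ((Equiv.Perm.sign q.1 : ℤ) : ℝ) *
            (if ospAct (q.1 * q.2⁻¹) t.rows = ρ
              then ((Equiv.Perm.sign q.2 : ℤ) : ℝ) else 0) := by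
      rw [Finset.sum_product]
      apply Finset.sum_congr rfl
      intro σ _
      rw [ET_tabPerm_apply, Finset.mul_sum]
    rw [hrw]
    apply Finset.sum_involution (fun q _ =>
      (Equiv.swap (pick AB a (ospAct (q.1 * q.2⁻¹) t.rows)).1
        (pick AB a (ospAct (q.1 * q.2⁻¹) t.rows)).2 * q.1, q.2))
    · intro q hq
      rcases Finset.mem_product.1 hq with ⟨hq1, hq2⟩
      obtain hspec := pick_spec (hEx q.1 hq1 q.2 hq2)
      set u := (pick AB a (ospAct (q.1 * q.2⁻¹) t.rows)).1 with hu
      set w := (pick AB a (ospAct (q.1 * q.2⁻¹) t.rows)).2 with hw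
      have hswap : ospAct (Equiv.swap u w) (ospAct (q.1 * q.2⁻¹) t.rows)
          = ospAct (q.1 * q.2⁻¹) t.rows := ospAct_swap_eq hspec.2.2
      have hν' : ospAct ((Equiv.swap u w * q.1) * q.2⁻¹) t.rows
          = ospAct (q.1 * q.2⁻¹) t.rows := by
        rw [mul_assoc, ospAct_mul, hswap]
      have hsgn : ((Equiv.Perm.sign (Equiv.swap u w * q.1) : ℤ) : ℝ)
          = -((Equiv.Perm.sign q.1 : ℤ) : ℝ) := by
        rw [sign_val_mul]
        rw [Equiv.Perm.sign_swap hspec.2.1]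
        norm_num
      simp only [hν', hsgn]
      ring
    · intro q hq hfne
      intro hgq
      have h1 : Equiv.swap (pick AB a (ospAct (q.1 * q.2⁻¹) t.rows)).1
          (pick AB a (ospAct (q.1 * q.2⁻¹) t.rows)).2 * q.1 = q.1 := congrArg Prod.fst hgq
      rcases Finset.mem_product.1 hq with ⟨hq1, hq2⟩
      obtain hspec := pick_spec (hEx q.1 hq1 q.2 hq2)
      have h2 : Equiv.swap (pick AB a (ospAct (q.1 * q.2⁻¹) t.rows)).1
          (pick AB a (ospAct (q.1 * q.2⁻¹) t.rows)).2 = 1 := by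
        have h3 : (Equiv.swap (pick AB a (ospAct (q.1 * q.2⁻¹) t.rows)).1
            (pick AB a (ospAct (q.1 * q.2⁻¹) t.rows)).2) * q.1 = 1 * q.1 := by
          rw [one_mul]
          exact h1
        exact mul_right_cancel h3
      have h4 := congrArg (fun e : Equiv.Perm (Fin n) =>
        e (pick AB a (ospAct (q.1 * q.2⁻¹) t.rows)).1) h2
      simp only [Equiv.swap_apply_left, Equiv.Perm.one_apply] at h4
      exact hspec.2.1 h4.symm
    · intro q hq
      rcases Finset.mem_product.1 hq with ⟨hq1, hq2⟩
      obtain hspec := pick_spec (hEx q.1 hq1 q.2 hq2)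
      rw [Finset.mem_product]
      refine ⟨?_, hq2⟩
      rw [hmemGS]
      intro z hz
      have h1 : z ≠ (pick AB a (ospAct (q.1 * q.2⁻¹) t.rows)).1 := by
        intro hh
        rw [hh] at hz
        exact hz hspec.1.1
      have h2 : z ≠ (pick AB a (ospAct (q.1 * q.2⁻¹) t.rows)).2 := by
        intro hh
        rw [hh] at hz
        exact hz hspec.1.2
      rw [Equiv.Perm.mul_apply, (hmemGS q.1).1 hq1 z hz,
        Equiv.swap_apply_of_ne_of_ne h1 h2]
    · intro q hq
      rcases Finset.mem_product.1 hq with ⟨hq1, hq2⟩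
      obtain hspec := pick_spec (hEx q.1 hq1 q.2 hq2)
      have hswap : ospAct (Equiv.swap (pick AB a (ospAct (q.1 * q.2⁻¹) t.rows)).1
            (pick AB a (ospAct (q.1 * q.2⁻¹) t.rows)).2) (ospAct (q.1 * q.2⁻¹) t.rows)
          = ospAct (q.1 * q.2⁻¹) t.rows := ospAct_swap_eq hspec.2.2
      have hν' : ospAct ((Equiv.swap (pick AB a (ospAct (q.1 * q.2⁻¹) t.rows)).1
            (pick AB a (ospAct (q.1 * q.2⁻¹) t.rows)).2 * q.1) * q.2⁻¹) t.rows
          = ospAct (q.1 * q.2⁻¹) t.rows := by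
        rw [mul_assoc, ospAct_mul, hswap]
      have : (Equiv.swap (pick AB a (ospAct ((Equiv.swap (pick AB a
            (ospAct (q.1 * q.2⁻¹) t.rows)).1 (pick AB a (ospAct (q.1 * q.2⁻¹) t.rows)).2
            * q.1) * q.2⁻¹) t.rows)).1
          (pick AB a (ospAct ((Equiv.swap (pick AB a (ospAct (q.1 * q.2⁻¹) t.rows)).1
            (pick AB a (ospAct (q.1 * q.2⁻¹) t.rows)).2 * q.1) * q.2⁻¹) t.rows)).2)
          = Equiv.swap (pick AB a (ospAct (q.1 * q.2⁻¹) t.rows)).1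
            (pick AB a (ospAct (q.1 * q.2⁻¹) t.rows)).2 := by
        rw [hν']
      ext1
      · show _ * (_ * q.1) = q.1
        rw [this, ← mul_assoc, Equiv.swap_mul_self, one_mul]
      · rfl
  -- split into H and F
  set H := GS.filter (fun σ => ∀ z ∈ A, σ z ∈ A) with hHd
  set F := GS.filter (fun σ => ¬ ∀ z ∈ A, σ z ∈ A) with hFd
  have hHsubCG : ∀ σ ∈ H, σ ∈ CGt t := by
    intro σ hσ
    rcases Finset.mem_filter.1 hσ with ⟨hσGS, hσA⟩
    have himg : A.image σ = A := by
      apply Finset.eq_of_subset_of_card_le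
      · intro z hz
        rcases Finset.mem_image.1 hz with ⟨z', hz', rfl⟩
        exact hσA z' hz'
      · rw [Finset.card_image_of_injective _ σ.injective]
    have hBmaps : ∀ z ∈ B, σ z ∈ B := by
      intro z hz
      have h1 : σ z ∈ AB := hGSmapsAB σ hσGS z (Finset.mem_union_right _ hz)
      rcases Finset.mem_union.1 h1 with h2 | h2
      · exfalso
        rw [← himg] at h2
        rcases Finset.mem_image.1 h2 with ⟨z', hz', hzz'⟩
        have h3 : z' = z := σ.injective hzz'
        rw [h3] at hz'
        exact (Finset.disjoint_left.1 hdisj hz') hz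
      · exact h2
    rw [mem_CGt]
    intro z
    by_cases hz : z ∈ AB
    · rcases Finset.mem_union.1 hz with h2 | h2
      · have h3 := hσA z h2
        rw [hmemA] at h2 h3
        omega
      · have h3 := hBmaps z h2
        rw [hmemB] at h2 h3
        omega
    · rw [(hmemGS σ).1 hσGS z hz]
  have hH1 : (1 : Equiv.Perm (Fin n)) ∈ H := by
    rw [hHd, Finset.mem_filter]
    constructor
    · rw [hmemGS]
      intro z _
      rfl
    · intro z hz
      simpa using hz
  refine ⟨H.card, F, Finset.card_pos.2 ⟨1, hH1⟩, ?_, ?_⟩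
  · -- mcol increases on F
    intro σ hσF
    rcases Finset.mem_filter.1 hσF with ⟨hσGS, hσnot⟩
    push_neg at hσnot
    obtain ⟨z₀, hz₀A, hz₀not⟩ := hσnot
    set D := Finset.univ.filter (fun z => t.col (σ⁻¹ z) ≠ t.col z) with hDd
    have hmemD : ∀ z, z ∈ D ↔ t.col (σ⁻¹ z) ≠ t.col z := by
      intro z; simp [hDd]
    have hx₀ : σ z₀ ∈ D := by
      have h1 : σ z₀ ∈ AB := hGSmapsAB σ hσGS z₀ (Finset.mem_union_left _ hz₀A)
      have h2 : σ z₀ ∈ B := (Finset.mem_union.1 h1).resolve_left hz₀not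
      rw [hmemD, ← Equiv.Perm.mul_apply, inv_mul_cancel, Equiv.Perm.one_apply]
      rw [hmemA] at hz₀A
      rw [hmemB] at h2
      omega
    have hDne : D.Nonempty := ⟨σ z₀, hx₀⟩
    set x' := D.max' hDne with hx'd
    have hx'D : x' ∈ D := D.max'_mem hDne
    have hx'col : t.col (σ⁻¹ x') ≠ t.col x' := (hmemD x').1 hx'D
    have hmaxD : ∀ y, x' < y → t.col (σ⁻¹ y) = t.col y := by
      intro y hy
      by_contra hc'
      have h1 : y ∈ D := (hmemD y).2 hc'
      exact absurd (D.le_max' y h1) (not_le.2 hy)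
    have hx'AB : x' ∈ AB := by
      by_contra hc'
      rw [hGSinvfix σ hσGS x' hc'] at hx'col
      exact hx'col rfl
    have hinvAB : σ⁻¹ x' ∈ AB := hGSinvmapsAB σ hσGS x' hx'AB
    have hkey : t.col x' < t.col (σ⁻¹ x') := by
      rcases Finset.mem_union.1 hx'AB with hA' | hB'
      · have h5 : t.col x' = c := ((hmemA x').1 hA').1
        rcases Finset.mem_union.1 hinvAB with h6 | h6
        · have h7 : t.col (σ⁻¹ x') = c := ((hmemA _).1 h6).1
          omega
        · have h7 : t.col (σ⁻¹ x') = c + 1 := ((hmemB _).1 h6).1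
          omega
      · exfalso
        have h5 : t.col x' = c + 1 := ((hmemB x').1 hB').1
        have h6 : σ⁻¹ x' ∈ A := by
          rcases Finset.mem_union.1 hinvAB with h' | h'
          · exact h'
          · exfalso
            have h7 : t.col (σ⁻¹ x') = c + 1 := ((hmemB _).1 h').1
            omega
        have h7 : ∃ x'' ∈ A, σ⁻¹ x'' ∈ B := by
          by_contra h8
          push_neg at h8
          have h9 : ∀ x'' ∈ A, σ⁻¹ x'' ∈ A := fun x'' hx'' =>
            (Finset.mem_union.1 (hGSinvmapsAB σ hσGS x''
              (Finset.mem_union_left _ hx''))).resolve_right (h8 x'' hx'')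
          have himg : A.image (fun z => σ⁻¹ z) = A := by
            apply Finset.eq_of_subset_of_card_le
            · intro z hz
              rcases Finset.mem_image.1 hz with ⟨z', hz', rfl⟩
              exact h9 z' hz'
            · rw [Finset.card_image_of_injective _ (σ⁻¹ : Equiv.Perm (Fin n)).injective]
          rw [← himg] at h6
          rcases Finset.mem_image.1 h6 with ⟨z', hz', hzz'⟩
          have h10 : z' = x' := (σ⁻¹ : Equiv.Perm (Fin n)).injective hzz'
          rw [h10] at hz'
          exact (Finset.disjoint_left.1 hdisj hz') hB'
        obtain ⟨x'', hx''A, hx''B⟩ := h7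
        have hx''D : x'' ∈ D := by
          rw [hmemD]
          have ha1 : t.col x'' = c := ((hmemA _).1 hx''A).1
          have ha2 : t.col (σ⁻¹ x'') = c + 1 := ((hmemB _).1 hx''B).1
          omega
        have h10 : x' < x'' := hABlt x'' hx''A x' hB'
        exact absurd (D.le_max' x'' hx''D) (not_le.2 h10)
    show mcol t < mcol (tabPerm σ t)
    unfold mcol
    exact digit_lt (by omega) t.col (fun z => t.col (σ⁻¹ z))
      (fun y => by
        have h1 := t.col_lt y
        have h2 := hγn (t.row y)
        omega)
      x' hkey (fun y hy => (hmaxD y hy).symm)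
  · -- the identity
    intro ρ
    have hsplit := Finset.sum_filter_add_sum_filter_not GS (fun σ => ∀ z ∈ A, σ z ∈ A)
      (fun σ => ((Equiv.Perm.sign σ : ℤ) : ℝ) * ET (tabPerm σ t) ρ)
    have hsumH : (∑ σ ∈ H, ((Equiv.Perm.sign σ : ℤ) : ℝ) * ET (tabPerm σ t) ρ)
        = (H.card : ℝ) * ET t ρ := by
      rw [Finset.sum_congr rfl (g := fun _ => ET t ρ) (fun σ hσ => ?_)]
      · rw [Finset.sum_const, nsmul_eq_mul]
      · have h1 : ET (tabPerm σ t) = pAct σ (ET t) := (pAct_ET σ t).symm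
        have h2 := pAct_ET_sign (hHsubCG σ hσ)
        rw [h1, h2]
        rw [← mul_assoc, sign_sq, one_mul]
    have h0 := claim0 ρ
    rw [← hsplit] at h0
    rw [hsumH] at h0
    linarith

end SLB

namespace SLB

open Finset Equiv

variable {n ℓ : ℕ} {γ : Fin ℓ → ℕ}

def SpanStd (n ℓ : ℕ) (γ : Fin ℓ → ℕ) : Submodule ℝ (OSP n ℓ γ → ℝ) :=
  Submodule.span ℝ (Set.range fun π : {π : OSP n ℓ γ // IsStandard π} => polytabloid π.1)

theorem ET_mem_span_std (hpart : Antitone γ) (hγn : ∀ j, γ j ≤ n) (t : Tab n ℓ γ) :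
    ET t ∈ SpanStd n ℓ γ := by
  classical
  suffices key : ∀ N : ℕ, ∀ t : Tab n ℓ γ,
      ((n + 1) ^ n - 1 - mcol t) * (n * n + 1) + minv t < N → ET t ∈ SpanStd n ℓ γ by
    exact key (((n + 1) ^ n - 1 - mcol t) * (n * n + 1) + minv t + 1) t (Nat.lt_succ_self _)
  intro N
  induction N with
  | zero => intro t ht; exact absurd ht (by omega)
  | succ N ih =>
    intro t ht
    by_cases h0 : 0 < minv t
    · obtain ⟨t', hET, hcols, hminv⟩ := swap_step t h0
      have hmcol : mcol t' = mcol t := by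
        unfold mcol
        apply Finset.sum_congr rfl
        intro x _
        rw [hcols]
      have hmem : ET t' ∈ SpanStd n ℓ γ := by
        apply ih
        have e : ((n + 1) ^ n - 1 - mcol t') * (n * n + 1)
            = ((n + 1) ^ n - 1 - mcol t) * (n * n + 1) := by rw [hmcol]
        omega
      have hfun : ET t = (-1 : ℝ) • ET t' := by
        funext ρ
        rw [hET ρ]
        simp
      rw [hfun]
      exact Submodule.smul_mem _ _ hmem
    · have hsort := colsorted_of_minv_zero (show minv t = 0 by omega)
      by_cases hrowinc : ∀ x y : Fin n, t.row x = t.row y → t.col y = t.col x + 1 → x < y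
      · obtain ⟨hstd, hET⟩ := ET_standard t hsort hrowinc
        rw [hET]
        exact Submodule.subset_span ⟨⟨t.rows, hstd⟩, rfl⟩
      · push_neg at hrowinc
        obtain ⟨x, y, hrxy, hcxy, hnlt⟩ := hrowinc
        have hyx : y < x := by
          rcases lt_trichotomy y x with h | h | h
          · exact h
          · exfalso; rw [h] at hcxy; omega
          · exact absurd h (not_lt.2 hnlt)
        obtain ⟨K, F, hK, hmeas, heq⟩ := garnir hpart hγn t hsort hrxy hcxy hyx
        have hterm : ∀ σ ∈ F, ET (tabPerm σ t) ∈ SpanStd n ℓ γ := by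
          intro σ hσ
          apply ih
          have h1 := hmeas σ hσ
          have h2 := mcol_le hγn (tabPerm σ t)
          have h3 := mcol_le hγn t
          have h4 := minv_le (tabPerm σ t)
          set X := (n + 1) ^ n - 1 - mcol t with hX1
          set X' := (n + 1) ^ n - 1 - mcol (tabPerm σ t) with hX2
          have hX : X' + 1 ≤ X := by omega
          have hstep : X' * (n * n + 1) + minv (tabPerm σ t) < X * (n * n + 1) := by
            calc X' * (n * n + 1) + minv (tabPerm σ t)
                < X' * (n * n + 1) + (n * n + 1) := by omega
              _ = (X' + 1) * (n * n + 1) := by ring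
              _ ≤ X * (n * n + 1) := Nat.mul_le_mul_right _ hX
          omega
        have hKne : (K : ℝ) ≠ 0 := by
          exact_mod_cast hK.ne'
        have hfun : ∀ ρ, ET t ρ
            = (K : ℝ)⁻¹ * (- ∑ σ ∈ F, ((Equiv.Perm.sign σ : ℤ) : ℝ) * ET (tabPerm σ t) ρ) := by
          intro ρ
          rw [← heq ρ, ← mul_assoc, inv_mul_cancel₀ hKne, one_mul]
        have hfun' : ET t = (K : ℝ)⁻¹ •
            (- ∑ σ ∈ F, ((Equiv.Perm.sign σ : ℤ) : ℝ) • ET (tabPerm σ t)) := by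
          funext ρ
          rw [hfun ρ]
          simp [Finset.sum_apply]
        rw [hfun']
        apply Submodule.smul_mem
        apply Submodule.neg_mem
        apply Submodule.sum_mem
        intro σ hσ
        exact Submodule.smul_mem _ _ (hterm σ hσ)

/-- `pAct` of a Specht element lies in the span of the standard polytabloids. -/
lemma pAct_mem_spanStd (hpart : Antitone γ) (hγn : ∀ j, γ j ≤ n)
    {v : OSP n ℓ γ → ℝ} (hv : v ∈ Specht n ℓ γ) (σ : Equiv.Perm (Fin n)) :
    pAct σ v ∈ SpanStd n ℓ γ := by
  induction hv using Submodule.span_induction with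
  | mem w hw =>
    obtain ⟨μ, rfl⟩ := hw
    rw [← ET_canon μ, pAct_ET]
    exact ET_mem_span_std hpart hγn _
  | zero =>
    have : pAct σ (0 : OSP n ℓ γ → ℝ) = 0 := rfl
    rw [this]
    exact Submodule.zero_mem _
  | add w₁ w₂ h₁ h₂ ih₁ ih₂ =>
    have : pAct σ (w₁ + w₂) = pAct σ w₁ + pAct σ w₂ := rfl
    rw [this]
    exact Submodule.add_mem _ ih₁ ih₂
  | smul c w h ih =>
    have : pAct σ (c • w) = c • pAct σ w := rfl
    rw [this]
    exact Submodule.smul_mem _ _ ih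

end SLB

namespace SLB

open Finset Equiv

variable {n ℓ : ℕ} {γ : Fin ℓ → ℕ}

lemma dot_zero_right (x : OSP n ℓ γ → ℝ) : dot x 0 = 0 := by
  unfold dot
  apply Finset.sum_eq_zero
  intro ρ _
  show x ρ * 0 = 0
  ring

lemma dot_add_right (x a b : OSP n ℓ γ → ℝ) : dot x (a + b) = dot x a + dot x b := by
  unfold dot
  rw [← Finset.sum_add_distrib]
  apply Finset.sum_congr rfl
  intro ρ _
  show x ρ * (a ρ + b ρ) = _
  ring

lemma dot_smul_right (x : OSP n ℓ γ → ℝ) (c : ℝ) (a : OSP n ℓ γ → ℝ) :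
    dot x (c • a) = c * dot x a := by
  unfold dot
  rw [Finset.mul_sum]
  apply Finset.sum_congr rfl
  intro ρ _
  show x ρ * (c * a ρ) = c * (x ρ * a ρ)
  ring

noncomputable def Tv (v : OSP n ℓ γ → ℝ) :
    (OSP n ℓ γ → ℝ) →ₗ[ℝ] (Equiv.Perm (Fin n) → ℝ) where
  toFun x := fun σ => dot x (pAct σ v)
  map_add' x y := by
    funext σ
    show dot (x + y) (pAct σ v) = dot x (pAct σ v) + dot y (pAct σ v)
    unfold dot
    rw [← Finset.sum_add_distrib]
    apply Finset.sum_congr rfl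
    intro ρ _
    show (x ρ + y ρ) * _ = _
    ring
  map_smul' c x := by
    funext σ
    show dot (c • x) (pAct σ v) = c * dot x (pAct σ v)
    unfold dot
    rw [Finset.mul_sum]
    apply Finset.sum_congr rfl
    intro ρ _
    show (c * x ρ) * _ = c * (x ρ * _)
    ring

lemma Tv_apply (v x : OSP n ℓ γ → ℝ) (σ : Equiv.Perm (Fin n)) :
    Tv v x σ = dot x (pAct σ v) := rfl

lemma Tv_delta (v : OSP n ℓ γ → ℝ) (π : OSP n ℓ γ) : Tv v (delta π) = liftB π v := by
  funext σ
  show dot (delta π) (pAct σ v) = v (ospAct σ⁻¹ π)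
  unfold dot delta
  rw [Finset.sum_eq_single π]
  · simp [pAct]
  · intro ρ _ hne
    rw [if_neg hne, zero_mul]
  · intro h
    exact absurd (Finset.mem_univ _) h

lemma Tv_pAct (v x : OSP n ℓ γ → ℝ) (σ : Equiv.Perm (Fin n)) :
    Tv v (pAct σ x) = rhoL σ (Tv v x) := by
  funext τ
  show dot (pAct σ x) (pAct τ v) = dot x (pAct (σ⁻¹ * τ) v)
  rw [dot_pAct, ← pAct_mul]

lemma Tv_eq_sum (v x : OSP n ℓ γ → ℝ) : Tv v x = ∑ ρ, x ρ • liftB ρ v := by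
  have h0 : x = ∑ ρ, x ρ • delta ρ := by
    funext ν
    rw [Finset.sum_apply]
    rw [Finset.sum_eq_single ν]
    · simp [delta]
    · intro ρ _ hne
      show x ρ • delta ρ ν = 0
      unfold delta
      rw [if_neg (fun h => hne h.symm)]
      simp
    · intro h
      exact absurd (Finset.mem_univ _) h
  conv_lhs => rw [h0]
  rw [map_sum]
  apply Finset.sum_congr rfl
  intro ρ _
  rw [map_smul, Tv_delta]

lemma range_Tv (v : OSP n ℓ γ → ℝ) :
    LinearMap.range (Tv v)
      = Submodule.span ℝ (Set.range fun μ : OSP n ℓ γ => liftB μ v) := by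
  apply le_antisymm
  · rintro _ ⟨x, rfl⟩
    rw [Tv_eq_sum]
    apply Submodule.sum_mem
    intro ρ _
    exact Submodule.smul_mem _ _ (Submodule.subset_span ⟨ρ, rfl⟩)
  · rw [Submodule.span_le]
    rintro _ ⟨μ, rfl⟩
    exact ⟨delta μ, Tv_delta v μ⟩

lemma span_rhoL_eq_range (v : OSP n ℓ γ → ℝ) (π₀ : OSP n ℓ γ) :
    Submodule.span ℝ {f | ∃ σ : Equiv.Perm (Fin n), f = rhoL σ (liftB π₀ v)}
      = LinearMap.range (Tv v) := by
  apply le_antisymm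
  · rw [Submodule.span_le]
    rintro f ⟨σ, rfl⟩
    refine ⟨pAct σ (delta π₀), ?_⟩
    rw [Tv_pAct, Tv_delta]
  · rw [range_Tv, Submodule.span_le]
    rintro _ ⟨μ, rfl⟩
    obtain ⟨σ, hσ1, -⟩ := exists_compat μ π₀
    apply Submodule.subset_span
    refine ⟨σ, ?_⟩
    rw [← Tv_delta v π₀, ← Tv_pAct, pAct_delta, hσ1, Tv_delta]

lemma exists_dot_ne {v : OSP n ℓ γ → ℝ} (hv : v ∈ Specht n ℓ γ) (hv0 : v ≠ 0) :
    ∃ t, dot v (polytabloid t) ≠ 0 := by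
  by_contra h
  push_neg at h
  have hall : ∀ w, w ∈ Specht n ℓ γ → dot v w = 0 := by
    intro w hw
    induction hw using Submodule.span_induction with
    | mem u hu => obtain ⟨t, rfl⟩ := hu; exact h t
    | zero => exact dot_zero_right v
    | add a b _ _ iha ihb => rw [dot_add_right, iha, ihb, add_zero]
    | smul c a _ iha => rw [dot_smul_right, iha, mul_zero]
  have hvv := hall v hv
  apply hv0
  funext ρ
  have h1 : ∀ ρ' ∈ (Finset.univ : Finset (OSP n ℓ γ)), 0 ≤ v ρ' * v ρ' :=
    fun ρ' _ => mul_self_nonneg _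
  have h2 := (Finset.sum_eq_zero_iff_of_nonneg h1).1 hvv ρ (Finset.mem_univ ρ)
  exact mul_self_eq_zero.1 h2

lemma kappa_dot (τ : OSP n ℓ γ) (w x : OSP n ℓ γ → ℝ) :
    dot w (polytabloid τ) * dot x (polytabloid τ)
      = ∑ β ∈ colGroup τ, ((Equiv.Perm.sign β : ℤ) : ℝ) * dot x (pAct β w) := by
  have h1 : ∀ β : Equiv.Perm (Fin n),
      dot x (pAct β w) = ∑ ρ, x ρ * w (ospAct β⁻¹ ρ) := fun β => rfl
  calc dot w (polytabloid τ) * dot x (polytabloid τ)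
      = ∑ ρ, x ρ * (dot w (polytabloid τ) * polytabloid τ ρ) := by
        unfold dot
        rw [Finset.mul_sum]
        apply Finset.sum_congr rfl
        intro ρ _
        ring
    _ = ∑ ρ, x ρ * ∑ β ∈ colGroup τ, ((Equiv.Perm.sign β : ℤ) : ℝ) * w (ospAct β⁻¹ ρ) := by
        apply Finset.sum_congr rfl
        intro ρ _
        rw [kappa_eq]
    _ = ∑ ρ, ∑ β ∈ colGroup τ,
          ((Equiv.Perm.sign β : ℤ) : ℝ) * (x ρ * w (ospAct β⁻¹ ρ)) := by
        apply Finset.sum_congr rfl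
        intro ρ _
        rw [Finset.mul_sum]
        apply Finset.sum_congr rfl
        intro β _
        ring
    _ = ∑ β ∈ colGroup τ, ∑ ρ,
          ((Equiv.Perm.sign β : ℤ) : ℝ) * (x ρ * w (ospAct β⁻¹ ρ)) := Finset.sum_comm
    _ = ∑ β ∈ colGroup τ, ((Equiv.Perm.sign β : ℤ) : ℝ) * dot x (pAct β w) := by
        apply Finset.sum_congr rfl
        intro β _
        rw [h1, Finset.mul_sum]

end SLB


open SLB

/-- standard liftings form a basis: for `0 ≠ v ∈ V_γ*` (the Specht
submodule) and any `π₀ ∈ Π_γ`, the family `{B_π v : π standard}` is a basis of the left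
`S_n`-module generated by `B_{π₀} v`; in particular this module equals the span of all
liftings `{B_μ v : μ ∈ Π_γ}`, and its dimension is the number of standard ordered set
partitions of shape `γ`. -/
theorem standard_liftings_basis {n ℓ : ℕ} (hn : 1 ≤ n) (γ : Fin ℓ → ℕ)
    (hpart : Antitone γ) (hsum : ∑ j, γ j = n)
    (v : OSP n ℓ γ → ℝ) (hv : v ∈ Specht n ℓ γ) (hv0 : v ≠ 0) (π₀ : OSP n ℓ γ) :
    LinearIndependent ℝ
      (fun π : {π : OSP n ℓ γ // IsStandard π} => liftB π.1 v) ∧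
    Submodule.span ℝ
        (Set.range fun π : {π : OSP n ℓ γ // IsStandard π} => liftB π.1 v) =
      Submodule.span ℝ {f | ∃ σ : Equiv.Perm (Fin n), f = rhoL σ (liftB π₀ v)} ∧
    Submodule.span ℝ {f | ∃ σ : Equiv.Perm (Fin n), f = rhoL σ (liftB π₀ v)} =
      Submodule.span ℝ (Set.range fun μ : OSP n ℓ γ => liftB μ v) ∧
    Module.finrank ℝ
        (Submodule.span ℝ {f | ∃ σ : Equiv.Perm (Fin n), f = rhoL σ (liftB π₀ v)}) =
      Nat.card {π : OSP n ℓ γ // IsStandard π} := by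
  classical
  haveI : Fintype {π : OSP n ℓ γ // IsStandard π} := Fintype.ofFinite _
  have hγn : ∀ j, γ j ≤ n := by
    intro j
    rw [← hsum]
    exact Finset.single_le_sum (fun i _ => Nat.zero_le _) (Finset.mem_univ j)
  obtain ⟨t0, ht0⟩ := exists_dot_ne hv hv0
  -- linear independence
  have hindep : LinearIndependent ℝ
      (fun π : {π : OSP n ℓ γ // IsStandard π} => liftB π.1 v) := by
    rw [Fintype.linearIndependent_iff]
    intro g hg
    set x : OSP n ℓ γ → ℝ := fun ρ => if h : IsStandard ρ then g ⟨ρ, h⟩ else 0 with hx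
    have hTx : ∀ σ : Equiv.Perm (Fin n), dot x (pAct σ v) = 0 := by
      intro σ
      have h1 : dot x (pAct σ v)
          = ∑ π : {π : OSP n ℓ γ // IsStandard π}, g π * liftB π.1 v σ := by
        unfold dot
        have e1 : (∑ ρ, x ρ * (pAct σ v) ρ)
            = ∑ ρ ∈ Finset.univ.filter (fun ρ : OSP n ℓ γ => IsStandard ρ),
                x ρ * (pAct σ v) ρ := by
          symm
          apply Finset.sum_subset (Finset.filter_subset _ _)
          intro ρ _ hρ
          simp only [Finset.mem_filter, Finset.mem_univ, true_and] at hρ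
          rw [hx]
          simp only
          rw [dif_neg hρ, zero_mul]
        have e2 : (∑ ρ ∈ Finset.univ.filter (fun ρ : OSP n ℓ γ => IsStandard ρ),
              x ρ * (pAct σ v) ρ)
            = ∑ π : {π : OSP n ℓ γ // IsStandard π}, x π.1 * (pAct σ v) π.1 := by
          apply Finset.sum_subtype
          intro ρ
          simp
        rw [e1, e2]
        apply Finset.sum_congr rfl
        intro π _
        rw [hx]
        simp only
        rw [dif_pos π.2]
        rfl
      rw [h1]
      have h2 := congrFun hg σ
      simpa [Finset.sum_apply] using h2
    have hdotstd : ∀ τ, IsStandard τ → dot x (polytabloid τ) = 0 := by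
      intro τ _
      obtain ⟨σ', hσ'⟩ := pAct_polytabloid τ t0
      have h4 : dot (pAct σ'⁻¹ v) (polytabloid τ) ≠ 0 := by
        rw [dot_pAct, inv_inv, hσ']
        exact ht0
      have h5 := kappa_dot τ (pAct σ'⁻¹ v) x
      have h7 : (∑ β ∈ colGroup τ,
          ((Equiv.Perm.sign β : ℤ) : ℝ) * dot x (pAct β (pAct σ'⁻¹ v))) = 0 :=
        Finset.sum_eq_zero (fun β _ => by rw [← pAct_mul, hTx, mul_zero])
      rw [h7] at h5
      exact (mul_eq_zero.1 h5).resolve_left h4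
    have hx0 : x = 0 := by
      apply eq_zero_of_dot_std x ?_ hdotstd
      intro ρ hρ
      by_contra hns
      rw [hx] at hρ
      simp only at hρ
      rw [dif_neg hns] at hρ
      exact hρ rfl
    intro π
    have h8 := congrFun hx0 π.1
    rw [hx] at h8
    simp only at h8
    rw [dif_pos π.2] at h8
    exact h8
  -- rank bound
  let Phi : (OSP n ℓ γ → ℝ) →ₗ[ℝ] ({π : OSP n ℓ γ // IsStandard π} → ℝ) :=
    { toFun := fun x => fun τ => dot x (polytabloid τ.1)
      map_add' := fun x y => by
        funext τ
        show dot (x + y) _ = dot x _ + dot y _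
        rw [dot_comm, dot_add_right, dot_comm (polytabloid τ.1) x, dot_comm (polytabloid τ.1) y]
      map_smul' := fun c x => by
        funext τ
        show dot (c • x) _ = c * dot x _
        rw [dot_comm, dot_smul_right, dot_comm] }
  have hker_le : LinearMap.ker Phi ≤ LinearMap.ker (Tv v) := by
    intro x hxk
    rw [LinearMap.mem_ker] at hxk ⊢
    funext σ
    show dot x (pAct σ v) = 0
    have hmem : pAct σ v ∈ SpanStd n ℓ γ := pAct_mem_spanStd hpart hγn hv σ
    have hgen : ∀ w ∈ SpanStd n ℓ γ, dot x w = 0 := by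
      intro w hw
      induction hw using Submodule.span_induction with
      | mem u hu =>
        obtain ⟨τ, rfl⟩ := hu
        exact congrFun hxk τ
      | zero => exact dot_zero_right x
      | add a b _ _ iha ihb => rw [dot_add_right, iha, ihb, add_zero]
      | smul c a _ iha => rw [dot_smul_right, iha, mul_zero]
    exact hgen _ hmem
  have hrank1 : Module.finrank ℝ (LinearMap.range (Tv v))
      ≤ Fintype.card {π : OSP n ℓ γ // IsStandard π} := by
    have ha := LinearMap.finrank_range_add_finrank_ker (Tv v)
    have hb := LinearMap.finrank_range_add_finrank_ker Phi
    have hc : Module.finrank ℝ (LinearMap.ker Phi)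
        ≤ Module.finrank ℝ (LinearMap.ker (Tv v)) := Submodule.finrank_mono hker_le
    have hd : Module.finrank ℝ (LinearMap.range Phi)
        ≤ Module.finrank ℝ ({π : OSP n ℓ γ // IsStandard π} → ℝ) := Submodule.finrank_le _
    rw [Module.finrank_pi ℝ] at hd
    omega
  have hsub : Submodule.span ℝ
      (Set.range fun π : {π : OSP n ℓ γ // IsStandard π} => liftB π.1 v)
        ≤ LinearMap.range (Tv v) := by
    rw [Submodule.span_le]
    rintro _ ⟨π, rfl⟩
    exact ⟨delta π.1, Tv_delta v π.1⟩
  have hcard : Module.finrank ℝ (Submodule.span ℝ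
      (Set.range fun π : {π : OSP n ℓ γ // IsStandard π} => liftB π.1 v))
        = Fintype.card {π : OSP n ℓ γ // IsStandard π} := finrank_span_eq_card hindep
  have hspaneq : Submodule.span ℝ
      (Set.range fun π : {π : OSP n ℓ γ // IsStandard π} => liftB π.1 v)
        = LinearMap.range (Tv v) := by
    apply Submodule.eq_of_le_of_finrank_le hsub
    rw [hcard]
    exact hrank1
  have hrhoL := span_rhoL_eq_range v π₀
  have hrange := range_Tv v
  refine ⟨hindep, ?_, ?_, ?_⟩
  · rw [hspaneq, hrhoL]
  · rw [hrhoL, hrange]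
  · rw [hrhoL, ← hspaneq, hcard]
    exact (Nat.card_eq_fintype_card).symm
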